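/- arXiv:1805.10112 — 4 statements merged into one kernel-verified Lean document; each statement's English description precedes it below -/
import Mathlib

section
/- Let G = (V,E) be a finite connected simple graph and suppose V = V₁ ∪ V₂ with V₁ ∩ V₂ = {v} a single vertex, every edge of G having both endpoints in V₁ or both in V₂, and the induced subgraphs G₁ = G[V₁] and G₂ = G[V₂] each connected with at least one edge. Then: (a) a set γ ⊆ E is a spanning tree of G if and only if γ ∩ E(G₁) is a spanning tree of G₁ and γ ∩ E(G₂) is a spanning tree of G₂; and (b) Mod₂(Γ_G)⁻¹ = Mod₂(Γ_{G₁})⁻¹ + Mod₂(Γ_{G₂})⁻¹. -/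
noncomputable section
open scoped Classical
open Finset

variable {V : Type*} [Fintype V] [DecidableEq V]

/-- A pmf on a finite family `Γ` of edge sets. -/
def IsPmf (Γ : Finset (Finset (Sym2 V))) (μ : Finset (Sym2 V) → ℝ) : Prop :=
  (∀ γ, 0 ≤ μ γ) ∧ (∀ γ, γ ∉ Γ → μ γ = 0) ∧ ∑ γ ∈ Γ, μ γ = 1

/-- Edge usage probability. -/
def eta (Γ : Finset (Finset (Sym2 V))) (μ : Finset (Sym2 V) → ℝ) (e : Sym2 V) : ℝ :=
  ∑ γ ∈ Γ.filter (fun γ => e ∈ γ), μ γ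

/-- Expected overlap. -/
def EO (Γ : Finset (Finset (Sym2 V))) (μ : Finset (Sym2 V) → ℝ) : ℝ :=
  ∑ γ ∈ Γ, ∑ γ' ∈ Γ, ((γ ∩ γ').card : ℝ) * μ γ * μ γ'

/-- Minimum expected overlap. -/
def MEO (Γ : Finset (Finset (Sym2 V))) : ℝ :=
  sInf {x : ℝ | ∃ μ, IsPmf Γ μ ∧ x = EO Γ μ}

/-- The set of spanning trees of `G`, as finsets of edges. -/
def spanningTrees (G : SimpleGraph V) : Finset (Finset (Sym2 V)) :=
  Finset.univ.filter (fun γ => ↑γ ⊆ G.edgeSet ∧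
    (SimpleGraph.fromEdgeSet (↑γ : Set (Sym2 V))).Connected ∧
    γ.card = Fintype.card V - 1)

/-- Edges of `G` with both endpoints in `W`. -/
def edgesWithin (G : SimpleGraph V) (W : Finset V) : Finset (Sym2 V) :=
  G.edgeFinset.filter (fun e => ∀ v ∈ e, v ∈ W)

/-- `γ` is a spanning tree of the subgraph of `G` induced by the vertex set `W`. -/
def IsSpanningTreeOn (G : SimpleGraph V) (W : Finset V) (γ : Finset (Sym2 V)) : Prop :=
  γ ⊆ edgesWithin G W ∧
    ((SimpleGraph.fromEdgeSet (↑γ : Set (Sym2 V))).induce (↑W : Set V)).Connected ∧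
    γ.card = W.card - 1

def spanningTreesOn (G : SimpleGraph V) (W : Finset V) : Finset (Finset (Sym2 V)) :=
  Finset.univ.filter (IsSpanningTreeOn G W)

def Adm (Γ : Finset (Finset (Sym2 V))) (ρ : Sym2 V → ℝ) : Prop :=
  (∀ e, 0 ≤ ρ e) ∧ ∀ γ ∈ Γ, 1 ≤ ∑ e ∈ γ, ρ e

def Mod2 (Eset : Finset (Sym2 V)) (Γ : Finset (Finset (Sym2 V))) : ℝ :=
  sInf {x : ℝ | ∃ ρ, Adm Γ ρ ∧ x = ∑ e ∈ Eset, (ρ e) ^ 2}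

/-- A fair spanning tree. -/
def IsFair (G : SimpleGraph V) (γ : Finset (Sym2 V)) : Prop :=
  ∃ μ, IsPmf (spanningTrees G) μ ∧ EO (spanningTrees G) μ = MEO (spanningTrees G) ∧ 0 < μ γ

def IsFeasiblePartition (G : SimpleGraph V) (P : Finset (Finset V)) : Prop :=
  2 ≤ P.card ∧ (∀ p ∈ P, p.Nonempty) ∧ (∀ v : V, ∃! p, p ∈ P ∧ v ∈ p) ∧
    ∀ p ∈ P, (G.induce (↑p : Set V)).Connected

/-- The edges of `G` joining distinct parts of the partition `P`. -/
def cutEdges (G : SimpleGraph V) (P : Finset (Finset V)) : Finset (Sym2 V) :=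
  G.edgeFinset.filter (fun e => ¬ ∃ p ∈ P, ∀ v ∈ e, v ∈ p)

/-- `G` is homogeneous. -/
def IsHomogeneous (G : SimpleGraph V) : Prop :=
  ∃ μ, IsPmf (spanningTrees G) μ ∧
    ∃ c : ℝ, ∀ e ∈ G.edgeFinset, eta (spanningTrees G) μ e = c

namespace STAux
open SimpleGraph

variable {W : Type*}

/-- Rerouting: if endpoints of a deleted edge remain reachable, reachability is preserved. -/
lemma reach_of_reach_delete {H : SimpleGraph W} {x y : W}
    (h : (H \ fromEdgeSet {s(x,y)}).Reachable x y) {u v : W} (hr : H.Reachable u v) :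
    (H \ fromEdgeSet {s(x,y)}).Reachable u v := by
  obtain ⟨w⟩ := hr
  induction w with
  | nil => exact Reachable.refl _
  | cons ha p ih =>
    rename_i a b c
    refine Reachable.trans ?_ ih
    by_cases he : s(a,b) = s(x,y)
    · rw [Sym2.eq_iff] at he
      rcases he with ⟨rfl, rfl⟩ | ⟨rfl, rfl⟩
      · exact h
      · exact h.symm
    · exact Adj.reachable (by simp [ha, he])

/-- Every finite connected graph contains a spanning tree (as an edge set). -/
lemma exists_spanning_tree_aux [Fintype W] :
    ∀ (n : ℕ) (H : SimpleGraph W), H.edgeSet.ncard = n → H.Connected →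
      ∃ τ : Finset (Sym2 W), ↑τ ⊆ H.edgeSet ∧ (fromEdgeSet (↑τ : Set (Sym2 W))).Connected ∧
        τ.card = Fintype.card W - 1 := by
  intro n
  induction n using Nat.strong_induction_on with
  | _ n ih =>
    intro H hcard hc
    by_cases hac : H.IsAcyclic
    · have ht : H.IsTree := ⟨hc, hac⟩
      have h1 := ht.card_edgeFinset
      have h2 : H.edgeSet.ncard = H.edgeFinset.card := Set.ncard_eq_toFinset_card' _
      refine ⟨H.edgeFinset, by simp, ?_, by omega⟩
      rw [coe_edgeFinset, fromEdgeSet_edgeSet]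
      exact hc
    · rw [isAcyclic_iff_forall_adj_isBridge] at hac
      push_neg at hac
      obtain ⟨a, b, hab, hbr⟩ := hac
      rw [isBridge_iff] at hbr
      push_neg at hbr
      have hreach := hbr
      set H' := H \ fromEdgeSet {s(a,b)} with hH'
      have hES : H'.edgeSet = H.edgeSet \ {s(a,b)} := by
        rw [hH']; exact edgeSet_deleteEdges _
      have hc' : H'.Connected := by
        haveI : Nonempty W := hc.nonempty
        exact ⟨fun u v => reach_of_reach_delete hreach (hc.preconnected u v)⟩
      have hlt : H'.edgeSet.ncard < n := by
        rw [hES, ← hcard]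
        exact Set.ncard_diff_singleton_lt_of_mem hab (Set.toFinite _)
      obtain ⟨τ, h1, h2, h3⟩ := ih _ hlt H' rfl hc'
      exact ⟨τ, h1.trans (hES ▸ Set.diff_subset), h2, h3⟩

/-- A connected graph on a finite vertex type has at least `card W - 1` edges. -/
lemma card_le_of_connected [Fintype W] (H : SimpleGraph W) (hc : H.Connected) :
    Fintype.card W - 1 ≤ H.edgeSet.ncard := by
  obtain ⟨τ, h1, _, h3⟩ := exists_spanning_tree_aux H.edgeSet.ncard H rfl hc
  calc Fintype.card W - 1 = (↑τ : Set (Sym2 W)).ncard := by rw [Set.ncard_coe_finset, h3]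
  _ ≤ H.edgeSet.ncard := Set.ncard_le_ncard h1 (Set.toFinite _)

/-- Walks stay inside `s` when all edges are within `s`. -/
lemma reachable_induce_of_reachable {H : SimpleGraph W} {s : Set W}
    (hE : ∀ ⦃a b : W⦄, H.Adj a b → a ∈ s) :
    ∀ {x y : W} (_ : H.Walk x y) (hx : x ∈ s) (hy : y ∈ s),
      (H.induce s).Reachable ⟨x, hx⟩ ⟨y, hy⟩ := by
  intro x y w
  induction w with
  | nil => intro hx hy; exact Reachable.refl _
  | cons ha p ih =>
    intro hx hy
    have hb := hE ha.symm
    exact Reachable.trans (Adj.reachable (by exact ha)) (ih hb hy)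

lemma reachable_of_reachable_induce {H : SimpleGraph W} {s : Set W} {u v : ↥s}
    (h : (H.induce s).Reachable u v) : H.Reachable ↑u ↑v :=
  h.map (SimpleGraph.Embedding.induce s).toHom

/-- Key splitting lemma: walks in `fromEdgeSet (γ1 ∪ γ2)` split at the articulation vertex. -/
lemma split_walk {γ1 γ2 : Set (Sym2 W)} {s1 s2 : Set W} {v : W}
    (h1 : ∀ e ∈ γ1, ∀ x ∈ e, x ∈ s1) (h2 : ∀ e ∈ γ2, ∀ x ∈ e, x ∈ s2)
    (hmeet : ∀ x, x ∈ s1 → x ∈ s2 → x = v) :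
    ∀ {x y : W} (_ : (fromEdgeSet (γ1 ∪ γ2)).Walk x y),
      ((x ∈ s1 → y ∈ s1 → (fromEdgeSet γ1).Reachable x y) ∧
       (x ∈ s1 → y ∉ s1 → (fromEdgeSet γ1).Reachable x v ∧ (fromEdgeSet γ2).Reachable v y) ∧
       (x ∉ s1 → y ∈ s1 → (fromEdgeSet γ2).Reachable x v ∧ (fromEdgeSet γ1).Reachable v y) ∧
       (x ∉ s1 → y ∉ s1 → (fromEdgeSet γ2).Reachable x y)) := by
  intro x y w
  induction w with
  | nil =>
    refine ⟨fun _ _ => Reachable.refl _, fun hx hy => absurd hx hy,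
      fun hx hy => absurd hy hx, fun _ _ => Reachable.refl _⟩
  | cons ha p ih =>
    rename_i a z c
    rw [fromEdgeSet_adj] at ha
    obtain ⟨hmem, hne⟩ := ha
    rcases hmem with hmem | hmem
    · have haz : a ∈ s1 := h1 _ hmem a (Sym2.mem_mk_left a z)
      have hz : z ∈ s1 := h1 _ hmem z (Sym2.mem_mk_right a z)
      have hadj : (fromEdgeSet γ1).Reachable a z :=
        Adj.reachable (by rw [fromEdgeSet_adj]; exact ⟨hmem, hne⟩)
      refine ⟨fun _ hy => hadj.trans (ih.1 hz hy),
        fun _ hy => ⟨hadj.trans ((ih.2.1 hz hy).1), (ih.2.1 hz hy).2⟩,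
        fun hx _ => absurd haz hx, fun hx _ => absurd haz hx⟩
    · have haz : a ∈ s2 := h2 _ hmem a (Sym2.mem_mk_left a z)
      have hz2 : z ∈ s2 := h2 _ hmem z (Sym2.mem_mk_right a z)
      have hadj : (fromEdgeSet γ2).Reachable a z :=
        Adj.reachable (by rw [fromEdgeSet_adj]; exact ⟨hmem, hne⟩)
      by_cases hz1 : z ∈ s1
      · have hzv : z = v := hmeet z hz1 hz2
        refine ⟨?_, ?_, ?_, ?_⟩
        · intro hx _
          exact absurd ((hmeet a hx haz).trans hzv.symm) hne
        · intro hx _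
          exact absurd ((hmeet a hx haz).trans hzv.symm) hne
        · intro hx hy
          exact ⟨hzv ▸ hadj, hzv ▸ (ih.1 hz1 hy)⟩
        · intro hx hy
          exact hadj.trans (hzv ▸ (ih.2.1 hz1 hy).2)
      · refine ⟨?_, ?_, ?_, ?_⟩
        · intro hx hy
          have hxv : a = v := hmeet a hx haz
          exact hxv ▸ (ih.2.2.1 hz1 hy).2
        · intro hx hy
          have hxv : a = v := hmeet a hx haz
          exact ⟨hxv ▸ Reachable.refl a, hxv ▸ (hadj.trans (ih.2.2.2 hz1 hy))⟩
        · intro hx hy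
          obtain ⟨r2, r1⟩ := ih.2.2.1 hz1 hy
          exact ⟨hadj.trans r2, r1⟩
        · intro hx hy
          exact hadj.trans (ih.2.2.2 hz1 hy)

end STAux

lemma mem_edgesWithin {V : Type*} [Fintype V] [DecidableEq V] {G : SimpleGraph V}
    {W : Finset V} {e : Sym2 V} :
    e ∈ edgesWithin G W ↔ e ∈ G.edgeFinset ∧ ∀ x ∈ e, x ∈ W := Finset.mem_filter

lemma serial_partA {V : Type*} [Fintype V] [DecidableEq V]
    (G : SimpleGraph V)
    (V₁ V₂ : Finset V) (v : V)
    (hcover : V₁ ∪ V₂ = Finset.univ) (hmeet : V₁ ∩ V₂ = {v})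
    (hedges : ∀ e ∈ G.edgeFinset, (∀ x ∈ e, x ∈ V₁) ∨ (∀ x ∈ e, x ∈ V₂))
    (γ : Finset (Sym2 V)) (hγ : ↑γ ⊆ G.edgeSet) :
    γ ∈ spanningTrees G ↔
      IsSpanningTreeOn G V₁ (γ ∩ edgesWithin G V₁) ∧
      IsSpanningTreeOn G V₂ (γ ∩ edgesWithin G V₂) := by
  classical
  have hvV₁ : v ∈ V₁ := by
    have h : v ∈ V₁ ∩ V₂ := by rw [hmeet]; exact Finset.mem_singleton_self v
    exact (Finset.mem_inter.mp h).1
  have hvV₂ : v ∈ V₂ := by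
    have h : v ∈ V₁ ∩ V₂ := by rw [hmeet]; exact Finset.mem_singleton_self v
    exact (Finset.mem_inter.mp h).2
  have hmeet' : ∀ x : V, x ∈ V₁ → x ∈ V₂ → x = v := by
    intro x h1 h2
    have h : x ∈ V₁ ∩ V₂ := Finset.mem_inter.mpr ⟨h1, h2⟩
    rw [hmeet] at h; exact Finset.mem_singleton.mp h
  have hdisj : ∀ e, e ∈ edgesWithin G V₁ → e ∈ edgesWithin G V₂ → False := by
    intro e he1 he2
    obtain ⟨hef, h1⟩ := mem_edgesWithin.mp he1
    obtain ⟨-, h2⟩ := mem_edgesWithin.mp he2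
    induction e using Sym2.ind with
    | _ a b =>
      have hadj : G.Adj a b := by
        rw [SimpleGraph.mem_edgeFinset, SimpleGraph.mem_edgeSet] at hef; exact hef
      have ha : a = v := hmeet' a (h1 a (Sym2.mem_mk_left a b)) (h2 a (Sym2.mem_mk_left a b))
      have hb : b = v := hmeet' b (h1 b (Sym2.mem_mk_right a b)) (h2 b (Sym2.mem_mk_right a b))
      rw [ha, hb] at hadj
      exact G.irrefl hadj
  set γ1 := γ ∩ edgesWithin G V₁ with hγ1def
  set γ2 := γ ∩ edgesWithin G V₂ with hγ2def
  have hγu : γ = γ1 ∪ γ2 := by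
    ext e
    simp only [hγ1def, hγ2def, Finset.mem_union, Finset.mem_inter]
    constructor
    · intro he
      have hef : e ∈ G.edgeFinset := by
        rw [SimpleGraph.mem_edgeFinset]; exact hγ (Finset.mem_coe.mpr he)
      rcases hedges e hef with h | h
      · exact Or.inl ⟨he, mem_edgesWithin.mpr ⟨hef, h⟩⟩
      · exact Or.inr ⟨he, mem_edgesWithin.mpr ⟨hef, h⟩⟩
    · rintro (⟨he, -⟩ | ⟨he, -⟩) <;> exact he
  have hdisj' : Disjoint γ1 γ2 := by
    rw [Finset.disjoint_left]
    intro e h1 h2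
    exact hdisj e (Finset.mem_inter.mp h1).2 (Finset.mem_inter.mp h2).2
  have hcoe : (↑γ : Set (Sym2 V)) = ↑γ1 ∪ ↑γ2 := by rw [hγu, Finset.coe_union]
  have hin1 : ∀ e ∈ (↑γ1 : Set (Sym2 V)), ∀ x ∈ e, x ∈ (↑V₁ : Set V) := by
    intro e he x hx
    exact Finset.mem_coe.mpr
      ((mem_edgesWithin.mp (Finset.mem_inter.mp (Finset.mem_coe.mp he)).2).2 x hx)
  have hin2 : ∀ e ∈ (↑γ2 : Set (Sym2 V)), ∀ x ∈ e, x ∈ (↑V₂ : Set V) := by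
    intro e he x hx
    exact Finset.mem_coe.mpr
      ((mem_edgesWithin.mp (Finset.mem_inter.mp (Finset.mem_coe.mp he)).2).2 x hx)
  have hmeetS : ∀ x : V, x ∈ (↑V₁ : Set V) → x ∈ (↑V₂ : Set V) → x = v := by
    intro x h1 h2
    exact hmeet' x (Finset.mem_coe.mp h1) (Finset.mem_coe.mp h2)
  have hVsum : V₁.card + V₂.card = Fintype.card V + 1 := by
    have h := Finset.card_union_add_card_inter V₁ V₂
    rw [hcover, hmeet] at h
    simpa [Finset.card_univ] using h.symm
  have hV1pos : 1 ≤ V₁.card := Finset.card_pos.mpr ⟨v, hvV₁⟩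
  have hV2pos : 1 ≤ V₂.card := Finset.card_pos.mpr ⟨v, hvV₂⟩
  have hNpos : 1 ≤ Fintype.card V := by
    haveI : Nonempty V := ⟨v⟩
    exact Fintype.card_pos
  have hcV1 : Fintype.card (↑V₁ : Set V) = V₁.card := by simp
  have hcV2 : Fintype.card (↑V₂ : Set V) = V₂.card := by simp
  constructor
  · intro hst
    rw [spanningTrees, Finset.mem_filter] at hst
    obtain ⟨-, -, hconn, hcard⟩ := hst
    have hreach1 : ∀ x y : V, x ∈ V₁ → y ∈ V₁ →
        (SimpleGraph.fromEdgeSet (↑γ1 : Set (Sym2 V))).Reachable x y := by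
      intro x y hx hy
      obtain ⟨w⟩ := hconn.preconnected x y
      rw [hcoe] at w
      exact (STAux.split_walk hin1 hin2 hmeetS w).1 hx hy
    have hreach2 : ∀ x y : V, x ∈ V₂ → y ∈ V₂ →
        (SimpleGraph.fromEdgeSet (↑γ2 : Set (Sym2 V))).Reachable x y := by
      intro x y hx hy
      obtain ⟨w⟩ := hconn.preconnected x y
      rw [hcoe, Set.union_comm] at w
      refine (STAux.split_walk hin2 hin1 (fun x h1 h2 => hmeetS x h2 h1) w).1 hx hy
    have hE1 : ∀ ⦃a b : V⦄, (SimpleGraph.fromEdgeSet (↑γ1 : Set (Sym2 V))).Adj a b →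
        a ∈ (↑V₁ : Set V) := by
      intro a b hab
      rw [SimpleGraph.fromEdgeSet_adj] at hab
      exact hin1 _ hab.1 a (Sym2.mem_mk_left a b)
    have hE2 : ∀ ⦃a b : V⦄, (SimpleGraph.fromEdgeSet (↑γ2 : Set (Sym2 V))).Adj a b →
        a ∈ (↑V₂ : Set V) := by
      intro a b hab
      rw [SimpleGraph.fromEdgeSet_adj] at hab
      exact hin2 _ hab.1 a (Sym2.mem_mk_left a b)
    have hconn1 : ((SimpleGraph.fromEdgeSet (↑γ1 : Set (Sym2 V))).induce
        (↑V₁ : Set V)).Connected := by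
      haveI : Nonempty (↑V₁ : Set V) := ⟨⟨v, hvV₁⟩⟩
      refine ⟨fun a b => ?_⟩
      obtain ⟨w⟩ := hreach1 ↑a ↑b (Finset.mem_coe.mp a.2) (Finset.mem_coe.mp b.2)
      exact STAux.reachable_induce_of_reachable hE1 w a.2 b.2
    have hconn2 : ((SimpleGraph.fromEdgeSet (↑γ2 : Set (Sym2 V))).induce
        (↑V₂ : Set V)).Connected := by
      haveI : Nonempty (↑V₂ : Set V) := ⟨⟨v, hvV₂⟩⟩
      refine ⟨fun a b => ?_⟩
      obtain ⟨w⟩ := hreach2 ↑a ↑b (Finset.mem_coe.mp a.2) (Finset.mem_coe.mp b.2)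
      exact STAux.reachable_induce_of_reachable hE2 w a.2 b.2
    have hcard1 : V₁.card - 1 ≤ γ1.card := by
      have hc := STAux.card_le_of_connected _ hconn1
      have himg : (Sym2.map (Subtype.val : (↑V₁ : Set V) → V)) ''
          ((SimpleGraph.fromEdgeSet (↑γ1 : Set (Sym2 V))).induce (↑V₁ : Set V)).edgeSet ⊆
          (↑γ1 : Set (Sym2 V)) := by
        rintro e ⟨f, hf, rfl⟩
        induction f using Sym2.ind with
        | _ p q =>
          rw [SimpleGraph.mem_edgeSet] at hf
          have h2 : (SimpleGraph.fromEdgeSet (↑γ1 : Set (Sym2 V))).Adj ↑p ↑q := hf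
          rw [SimpleGraph.fromEdgeSet_adj] at h2
          simpa using h2.1
      calc V₁.card - 1 = Fintype.card (↑V₁ : Set V) - 1 := by rw [hcV1]
        _ ≤ _ := hc
        _ = ((Sym2.map (Subtype.val : (↑V₁ : Set V) → V)) ''
              ((SimpleGraph.fromEdgeSet (↑γ1 : Set (Sym2 V))).induce
                (↑V₁ : Set V)).edgeSet).ncard :=
            (Set.ncard_image_of_injective _ (Sym2.map.injective Subtype.val_injective)).symm
        _ ≤ (↑γ1 : Set (Sym2 V)).ncard := Set.ncard_le_ncard himg (Set.toFinite _)
        _ = γ1.card := Set.ncard_coe_finset _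
    have hcard2 : V₂.card - 1 ≤ γ2.card := by
      have hc := STAux.card_le_of_connected _ hconn2
      have himg : (Sym2.map (Subtype.val : (↑V₂ : Set V) → V)) ''
          ((SimpleGraph.fromEdgeSet (↑γ2 : Set (Sym2 V))).induce (↑V₂ : Set V)).edgeSet ⊆
          (↑γ2 : Set (Sym2 V)) := by
        rintro e ⟨f, hf, rfl⟩
        induction f using Sym2.ind with
        | _ p q =>
          rw [SimpleGraph.mem_edgeSet] at hf
          have h2 : (SimpleGraph.fromEdgeSet (↑γ2 : Set (Sym2 V))).Adj ↑p ↑q := hf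
          rw [SimpleGraph.fromEdgeSet_adj] at h2
          simpa using h2.1
      calc V₂.card - 1 = Fintype.card (↑V₂ : Set V) - 1 := by rw [hcV2]
        _ ≤ _ := hc
        _ = ((Sym2.map (Subtype.val : (↑V₂ : Set V) → V)) ''
              ((SimpleGraph.fromEdgeSet (↑γ2 : Set (Sym2 V))).induce
                (↑V₂ : Set V)).edgeSet).ncard :=
            (Set.ncard_image_of_injective _ (Sym2.map.injective Subtype.val_injective)).symm
        _ ≤ (↑γ2 : Set (Sym2 V)).ncard := Set.ncard_le_ncard himg (Set.toFinite _)
        _ = γ2.card := Set.ncard_coe_finset _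
    have hsum : γ1.card + γ2.card = Fintype.card V - 1 := by
      rw [← Finset.card_union_of_disjoint hdisj', ← hγu, hcard]
    exact ⟨⟨Finset.inter_subset_right, hconn1, by omega⟩,
      ⟨Finset.inter_subset_right, hconn2, by omega⟩⟩
  · rintro ⟨⟨hsub1, hconn1, hcard1⟩, ⟨hsub2, hconn2, hcard2⟩⟩
    rw [spanningTrees, Finset.mem_filter]
    refine ⟨Finset.mem_univ _, hγ, ?_, ?_⟩
    · haveI : Nonempty V := ⟨v⟩
      have hle1 : SimpleGraph.fromEdgeSet (↑γ1 : Set (Sym2 V)) ≤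
          SimpleGraph.fromEdgeSet (↑γ : Set (Sym2 V)) :=
        SimpleGraph.fromEdgeSet_mono (Finset.coe_subset.mpr Finset.inter_subset_left)
      have hle2 : SimpleGraph.fromEdgeSet (↑γ2 : Set (Sym2 V)) ≤
          SimpleGraph.fromEdgeSet (↑γ : Set (Sym2 V)) :=
        SimpleGraph.fromEdgeSet_mono (Finset.coe_subset.mpr Finset.inter_subset_left)
      have hR : ∀ x : V, (SimpleGraph.fromEdgeSet (↑γ : Set (Sym2 V))).Reachable x v := by
        intro x
        have hx : x ∈ V₁ ∨ x ∈ V₂ := by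
          have h : x ∈ V₁ ∪ V₂ := hcover ▸ Finset.mem_univ x
          exact Finset.mem_union.mp h
        rcases hx with hx | hx
        · have h := hconn1.preconnected ⟨x, Finset.mem_coe.mpr hx⟩ ⟨v, Finset.mem_coe.mpr hvV₁⟩
          exact (STAux.reachable_of_reachable_induce h).mono hle1
        · have h := hconn2.preconnected ⟨x, Finset.mem_coe.mpr hx⟩ ⟨v, Finset.mem_coe.mpr hvV₂⟩
          exact (STAux.reachable_of_reachable_induce h).mono hle2
      exact ⟨fun a b => (hR a).trans (hR b).symm⟩
    · rw [hγu, Finset.card_union_of_disjoint hdisj', hcard1, hcard2]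
      omega

lemma spanningTreesOn_nonempty {V : Type*} [Fintype V] [DecidableEq V]
    (G : SimpleGraph V) (W : Finset V) (hconn : (G.induce (↑W : Set V)).Connected) :
    (spanningTreesOn G W).Nonempty := by
  classical
  obtain ⟨τ, h1, h2, h3⟩ := STAux.exists_spanning_tree_aux
    ((G.induce (↑W : Set V)).edgeSet.ncard) (G.induce (↑W : Set V)) rfl hconn
  refine ⟨τ.image (Sym2.map Subtype.val), ?_⟩
  rw [spanningTreesOn, Finset.mem_filter]
  have hkey : (SimpleGraph.fromEdgeSet
        (↑(τ.image (Sym2.map Subtype.val)) : Set (Sym2 V))).induce (↑W : Set V) =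
      SimpleGraph.fromEdgeSet (↑τ : Set (Sym2 (↑W : Set V))) := by
    ext a b
    simp only [SimpleGraph.comap_adj, Function.Embedding.coe_subtype,
      SimpleGraph.fromEdgeSet_adj, Finset.mem_coe, Finset.mem_image]
    constructor
    · rintro ⟨⟨f, hf, hmap⟩, hne⟩
      have hfe : f = s(a, b) := by
        apply Sym2.map.injective Subtype.val_injective
        rw [hmap]; rfl
      exact ⟨hfe ▸ hf, fun h => hne (by rw [h])⟩
    · rintro ⟨hf, hne⟩
      exact ⟨⟨s(a, b), hf, rfl⟩, fun h => hne (Subtype.val_injective h)⟩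
  refine ⟨Finset.mem_univ _, ?_, ?_, ?_⟩
  · intro e he
    rw [Finset.mem_image] at he
    obtain ⟨f, hf, rfl⟩ := he
    have hfe : (↑f : Sym2 (↑W : Set V)) ∈ (G.induce (↑W : Set V)).edgeSet :=
      h1 (Finset.mem_coe.mpr hf)
    induction f using Sym2.ind with
    | _ p q =>
      rw [SimpleGraph.mem_edgeSet] at hfe
      have hadj : G.Adj ↑p ↑q := hfe
      rw [mem_edgesWithin]
      constructor
      · show Sym2.map Subtype.val s(p, q) ∈ G.edgeFinset
        rw [Sym2.map_pair_eq, SimpleGraph.mem_edgeFinset, SimpleGraph.mem_edgeSet]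
        exact hadj
      · intro x hx
        rw [Sym2.map_pair_eq, Sym2.mem_iff] at hx
        rcases hx with rfl | rfl
        · exact Finset.mem_coe.mp p.2
        · exact Finset.mem_coe.mp q.2
  · rw [hkey]; exact h2
  · rw [Finset.card_image_of_injective τ (Sym2.map.injective Subtype.val_injective), h3]
    congr 1
    simp

lemma adm_iff {V : Type*} [Fintype V] [DecidableEq V] {Γ : Finset (Finset (Sym2 V))}
    {ρ : Sym2 V → ℝ} :
    Adm Γ ρ ↔ (∀ e, 0 ≤ ρ e) ∧ ∀ γ ∈ Γ, 1 ≤ ∑ e ∈ γ, ρ e := Iff.rfl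

lemma mod2_set_bddBelow {V : Type*} [Fintype V] [DecidableEq V]
    (Eset : Finset (Sym2 V)) (Γ : Finset (Finset (Sym2 V))) :
    BddBelow {x : ℝ | ∃ ρ, Adm Γ ρ ∧ x = ∑ e ∈ Eset, (ρ e) ^ 2} := by
  refine ⟨0, ?_⟩
  rintro x ⟨ρ, -, rfl⟩
  positivity

lemma mod2_set_nonempty {V : Type*} [Fintype V] [DecidableEq V]
    (Eset : Finset (Sym2 V)) (Γ : Finset (Finset (Sym2 V)))
    (hpos : ∀ γ ∈ Γ, 1 ≤ γ.card) :
    Set.Nonempty {x : ℝ | ∃ ρ, Adm Γ ρ ∧ x = ∑ e ∈ Eset, (ρ e) ^ 2} := by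
  refine ⟨∑ e ∈ Eset, (1 : ℝ), fun _ => 1, ⟨fun e => zero_le_one, fun γ hγ => ?_⟩, by norm_num⟩
  have := hpos γ hγ
  rw [Finset.sum_const, nsmul_eq_mul, mul_one]
  exact_mod_cast this

lemma mod2_pos {V : Type*} [Fintype V] [DecidableEq V]
    (Eset : Finset (Sym2 V)) (Γ : Finset (Finset (Sym2 V)))
    (γ0 : Finset (Sym2 V)) (hγ0 : γ0 ∈ Γ) (hγ0sub : γ0 ⊆ Eset) (hγ0pos : 1 ≤ γ0.card)
    (hpos : ∀ γ ∈ Γ, 1 ≤ γ.card) :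
    0 < Mod2 Eset Γ := by
  have hb : (0 : ℝ) < 1 / γ0.card := by
    have : (0 : ℝ) < γ0.card := by exact_mod_cast hγ0pos
    positivity
  refine lt_of_lt_of_le hb ?_
  refine le_csInf (mod2_set_nonempty Eset Γ hpos) ?_
  rintro x ⟨ρ, ⟨hρ0, hρadm⟩, rfl⟩
  have h1 : (1 : ℝ) ≤ ∑ e ∈ γ0, ρ e := hρadm γ0 hγ0
  have h2 : (∑ e ∈ γ0, ρ e) ^ 2 ≤ γ0.card * ∑ e ∈ γ0, (ρ e) ^ 2 :=
    sq_sum_le_card_mul_sum_sq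
  have h3 : ∑ e ∈ γ0, (ρ e) ^ 2 ≤ ∑ e ∈ Eset, (ρ e) ^ 2 :=
    Finset.sum_le_sum_of_subset_of_nonneg hγ0sub (fun e _ _ => sq_nonneg _)
  have hcpos : (0 : ℝ) < γ0.card := by exact_mod_cast hγ0pos
  rw [div_le_iff₀ hcpos, mul_comm]
  calc (1 : ℝ) ≤ (∑ e ∈ γ0, ρ e) ^ 2 := by nlinarith
    _ ≤ γ0.card * ∑ e ∈ γ0, (ρ e) ^ 2 := h2
    _ ≤ γ0.card * ∑ e ∈ Eset, (ρ e) ^ 2 := by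
        exact mul_le_mul_of_nonneg_left h3 (le_of_lt hcpos)

lemma two_le_card_of_edgesWithin {V : Type*} [Fintype V] [DecidableEq V]
    {G : SimpleGraph V} {W : Finset V} (hne : (edgesWithin G W).Nonempty) :
    2 ≤ W.card := by
  obtain ⟨e, he⟩ := hne
  revert he
  induction e using Sym2.ind with
  | _ a b =>
    intro he
    obtain ⟨hef, hin⟩ := mem_edgesWithin.mp he
    have hadj : G.Adj a b := by
      rw [SimpleGraph.mem_edgeFinset, SimpleGraph.mem_edgeSet] at hef; exact hef
    exact Finset.one_lt_card.mpr
      ⟨a, hin a (Sym2.mem_mk_left a b), b, hin b (Sym2.mem_mk_right a b), hadj.ne⟩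

lemma union_split {V : Type*} [Fintype V] [DecidableEq V]
    (G : SimpleGraph V) (V₁ V₂ : Finset V)
    (hedges : ∀ e ∈ G.edgeFinset, (∀ x ∈ e, x ∈ V₁) ∨ (∀ x ∈ e, x ∈ V₂))
    (γ : Finset (Sym2 V)) (hγ : ↑γ ⊆ G.edgeSet) :
    γ = (γ ∩ edgesWithin G V₁) ∪ (γ ∩ edgesWithin G V₂) := by
  ext e
  simp only [Finset.mem_union, Finset.mem_inter]
  constructor
  · intro he
    have hef : e ∈ G.edgeFinset := by
      rw [SimpleGraph.mem_edgeFinset]; exact hγ (Finset.mem_coe.mpr he)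
    rcases hedges e hef with h | h
    · exact Or.inl ⟨he, mem_edgesWithin.mpr ⟨hef, h⟩⟩
    · exact Or.inr ⟨he, mem_edgesWithin.mpr ⟨hef, h⟩⟩
  · rintro (⟨he, -⟩ | ⟨he, -⟩) <;> exact he

lemma serial_partB {V : Type*} [Fintype V] [DecidableEq V]
    (G : SimpleGraph V)
    (V₁ V₂ : Finset V) (v : V)
    (hcover : V₁ ∪ V₂ = Finset.univ) (hmeet : V₁ ∩ V₂ = {v})
    (hedges : ∀ e ∈ G.edgeFinset, (∀ x ∈ e, x ∈ V₁) ∨ (∀ x ∈ e, x ∈ V₂))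
    (hconn₁ : (G.induce (↑V₁ : Set V)).Connected)
    (hconn₂ : (G.induce (↑V₂ : Set V)).Connected)
    (hne₁ : (edgesWithin G V₁).Nonempty) (hne₂ : (edgesWithin G V₂).Nonempty) :
    (Mod2 G.edgeFinset (spanningTrees G))⁻¹ =
      (Mod2 (edgesWithin G V₁) (spanningTreesOn G V₁))⁻¹ +
      (Mod2 (edgesWithin G V₂) (spanningTreesOn G V₂))⁻¹ := by
  classical
  set E1 := edgesWithin G V₁ with hE1def
  set E2 := edgesWithin G V₂ with hE2def
  set Γ1 := spanningTreesOn G V₁ with hΓ1def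
  set Γ2 := spanningTreesOn G V₂ with hΓ2def
  set Γ := spanningTrees G with hΓdef
  -- basic vertex facts
  have hvV₁ : v ∈ V₁ := by
    have h : v ∈ V₁ ∩ V₂ := by rw [hmeet]; exact Finset.mem_singleton_self v
    exact (Finset.mem_inter.mp h).1
  have hvV₂ : v ∈ V₂ := by
    have h : v ∈ V₁ ∩ V₂ := by rw [hmeet]; exact Finset.mem_singleton_self v
    exact (Finset.mem_inter.mp h).2
  have hmeet' : ∀ x : V, x ∈ V₁ → x ∈ V₂ → x = v := by
    intro x h1 h2
    have h : x ∈ V₁ ∩ V₂ := Finset.mem_inter.mpr ⟨h1, h2⟩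
    rw [hmeet] at h; exact Finset.mem_singleton.mp h
  have hdisj : ∀ e, e ∈ E1 → e ∈ E2 → False := by
    intro e he1 he2
    obtain ⟨hef, h1⟩ := mem_edgesWithin.mp he1
    obtain ⟨-, h2⟩ := mem_edgesWithin.mp he2
    revert hef h1 h2
    induction e using Sym2.ind with
    | _ a b =>
      intro hef h1 h2
      have hadj : G.Adj a b := by
        rw [SimpleGraph.mem_edgeFinset, SimpleGraph.mem_edgeSet] at hef; exact hef
      have ha : a = v := hmeet' a (h1 a (Sym2.mem_mk_left a b)) (h2 a (Sym2.mem_mk_left a b))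
      have hb : b = v := hmeet' b (h1 b (Sym2.mem_mk_right a b)) (h2 b (Sym2.mem_mk_right a b))
      rw [ha, hb] at hadj
      exact G.irrefl hadj
  have hdisjE : Disjoint E1 E2 := by
    rw [Finset.disjoint_left]
    exact fun {e} h1 h2 => hdisj e h1 h2
  have hEuniv : G.edgeFinset = E1 ∪ E2 := by
    ext e
    simp only [Finset.mem_union]
    constructor
    · intro he
      rcases hedges e he with h | h
      · exact Or.inl (mem_edgesWithin.mpr ⟨he, h⟩)
      · exact Or.inr (mem_edgesWithin.mpr ⟨he, h⟩)
    · rintro (h | h) <;> exact (mem_edgesWithin.mp h).1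
  have hΓ1iff : ∀ γ1, γ1 ∈ Γ1 ↔ IsSpanningTreeOn G V₁ γ1 := by
    intro γ1
    rw [hΓ1def, spanningTreesOn, Finset.mem_filter]
    exact ⟨fun h => h.2, fun h => ⟨Finset.mem_univ _, h⟩⟩
  have hΓ2iff : ∀ γ2, γ2 ∈ Γ2 ↔ IsSpanningTreeOn G V₂ γ2 := by
    intro γ2
    rw [hΓ2def, spanningTreesOn, Finset.mem_filter]
    exact ⟨fun h => h.2, fun h => ⟨Finset.mem_univ _, h⟩⟩
  have hΓ1ne : Γ1.Nonempty := spanningTreesOn_nonempty G V₁ hconn₁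
  have hΓ2ne : Γ2.Nonempty := spanningTreesOn_nonempty G V₂ hconn₂
  have hT1 : ∀ γ1 ∈ Γ1, γ1 ⊆ E1 ∧ γ1.card = V₁.card - 1 := by
    intro γ1 h
    have t := (hΓ1iff γ1).mp h
    exact ⟨t.1, t.2.2⟩
  have hT2 : ∀ γ2 ∈ Γ2, γ2 ⊆ E2 ∧ γ2.card = V₂.card - 1 := by
    intro γ2 h
    have t := (hΓ2iff γ2).mp h
    exact ⟨t.1, t.2.2⟩
  have hV1two : 2 ≤ V₁.card := two_le_card_of_edgesWithin hne₁
  have hV2two : 2 ≤ V₂.card := two_le_card_of_edgesWithin hne₂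
  have hΓ1pos : ∀ γ1 ∈ Γ1, 1 ≤ γ1.card := by
    intro γ1 h
    have := (hT1 γ1 h).2
    omega
  have hΓ2pos : ∀ γ2 ∈ Γ2, 1 ≤ γ2.card := by
    intro γ2 h
    have := (hT2 γ2 h).2
    omega
  have hunion : ∀ γ1 ∈ Γ1, ∀ γ2 ∈ Γ2, γ1 ∪ γ2 ∈ Γ := by
    intro γ1 h1 γ2 h2
    have t1 := (hΓ1iff γ1).mp h1
    have t2 := (hΓ2iff γ2).mp h2
    have hsubE : ↑(γ1 ∪ γ2) ⊆ G.edgeSet := by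
      intro e he
      rw [Finset.coe_union] at he
      rw [← SimpleGraph.mem_edgeFinset, hEuniv, Finset.mem_union]
      rcases he with he | he
      · exact Or.inl (t1.1 (Finset.mem_coe.mp he))
      · exact Or.inr (t2.1 (Finset.mem_coe.mp he))
    have hi1 : (γ1 ∪ γ2) ∩ E1 = γ1 := by
      rw [Finset.union_inter_distrib_right, Finset.inter_eq_left.mpr t1.1,
        Finset.disjoint_iff_inter_eq_empty.mp (hdisjE.symm.mono_left t2.1), Finset.union_empty]
    have hi2 : (γ1 ∪ γ2) ∩ E2 = γ2 := by
      rw [Finset.union_inter_distrib_right, Finset.inter_eq_left.mpr t2.1,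
        Finset.disjoint_iff_inter_eq_empty.mp (hdisjE.mono_left t1.1), Finset.empty_union]
    rw [hΓdef]
    exact (serial_partA G V₁ V₂ v hcover hmeet hedges _ hsubE).mpr
      ⟨by rw [hi1]; exact t1, by rw [hi2]; exact t2⟩
  have hΓne : Γ.Nonempty := by
    obtain ⟨γ1, h1⟩ := hΓ1ne
    obtain ⟨γ2, h2⟩ := hΓ2ne
    exact ⟨γ1 ∪ γ2, hunion γ1 h1 γ2 h2⟩
  have hdecomp : ∀ γ ∈ Γ, (γ ∩ E1) ∈ Γ1 ∧ (γ ∩ E2) ∈ Γ2 ∧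
      γ = (γ ∩ E1) ∪ (γ ∩ E2) ∧ Disjoint (γ ∩ E1) (γ ∩ E2) := by
    intro γ hγ
    have hsubE : ↑γ ⊆ G.edgeSet := by
      have h := Finset.mem_filter.mp (hΓdef ▸ hγ)
      exact h.2.1
    have h := (serial_partA G V₁ V₂ v hcover hmeet hedges γ hsubE).mp (hΓdef ▸ hγ)
    exact ⟨(hΓ1iff _).mpr h.1, (hΓ2iff _).mpr h.2,
      union_split G V₁ V₂ hedges γ hsubE,
      hdisjE.mono Finset.inter_subset_right Finset.inter_subset_right⟩
  have hΓpos : ∀ γ ∈ Γ, 1 ≤ γ.card := by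
    intro γ hγ
    obtain ⟨h1, -, hu, -⟩ := hdecomp γ hγ
    have hc1 := (hT1 _ h1).2
    have hle : (γ ∩ E1).card ≤ γ.card := Finset.card_le_card Finset.inter_subset_left
    omega
  set M1 := Mod2 E1 Γ1 with hM1def
  set M2 := Mod2 E2 Γ2 with hM2def
  obtain ⟨γ01, hγ01⟩ := hΓ1ne
  obtain ⟨γ02, hγ02⟩ := hΓ2ne
  obtain ⟨γ0, hγ0⟩ := hΓne
  have hM1pos : 0 < M1 :=
    mod2_pos E1 Γ1 γ01 hγ01 (hT1 _ hγ01).1 (hΓ1pos _ hγ01) hΓ1pos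
  have hM2pos : 0 < M2 :=
    mod2_pos E2 Γ2 γ02 hγ02 (hT2 _ hγ02).1 (hΓ2pos _ hγ02) hΓ2pos
  have hγ0sub : γ0 ⊆ G.edgeFinset := by
    intro e he
    rw [SimpleGraph.mem_edgeFinset]
    exact (Finset.mem_filter.mp (hΓdef ▸ hγ0)).2.1 (Finset.mem_coe.mpr he)
  have hMpos : 0 < Mod2 G.edgeFinset Γ :=
    mod2_pos G.edgeFinset Γ γ0 hγ0 hγ0sub (hΓpos _ hγ0) hΓpos
  have hMsum : 0 < M1 + M2 := by linarith
  -- lower bound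
  have hge : M1 * M2 / (M1 + M2) ≤ Mod2 G.edgeFinset Γ := by
    refine le_csInf (mod2_set_nonempty _ _ hΓpos) ?_
    rintro x ⟨ρ, ⟨hρ0, hρadm⟩, rfl⟩
    obtain ⟨γm, hγm, hmin⟩ := Finset.exists_min_image Γ1 (fun γ1 => ∑ e ∈ γ1, ρ e) ⟨γ01, hγ01⟩
    set t := ∑ e ∈ γm, ρ e with htdef
    have ht0 : 0 ≤ t := Finset.sum_nonneg fun e _ => hρ0 e
    set u := min t 1 with hudef
    have hu0 : 0 ≤ u := le_min ht0 zero_le_one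
    have hu1 : u ≤ 1 := min_le_right _ _
    have hut : u ≤ t := min_le_left _ _
    have hsplitsum : ∑ e ∈ G.edgeFinset, (ρ e) ^ 2 =
        ∑ e ∈ E1, (ρ e) ^ 2 + ∑ e ∈ E2, (ρ e) ^ 2 := by
      rw [hEuniv, Finset.sum_union hdisjE]
    have hclaim1 : u ^ 2 * M1 ≤ ∑ e ∈ E1, (ρ e) ^ 2 := by
      rcases eq_or_lt_of_le hu0 with h0 | h0
      · rw [← h0]
        simpa using Finset.sum_nonneg fun (e : Sym2 V) _ => sq_nonneg (ρ e)
      · have hadm' : Adm Γ1 (fun e => ρ e / u) := by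
          refine ⟨fun e => div_nonneg (hρ0 e) hu0, fun γ1 hγ1 => ?_⟩
          rw [← Finset.sum_div, le_div_iff₀ h0, one_mul]
          calc u ≤ t := hut
            _ ≤ ∑ e ∈ γ1, ρ e := hmin γ1 hγ1
        have hle : M1 ≤ ∑ e ∈ E1, (ρ e / u) ^ 2 :=
          csInf_le (mod2_set_bddBelow _ _) ⟨_, hadm', rfl⟩
        have heq : ∑ e ∈ E1, (ρ e / u) ^ 2 = (∑ e ∈ E1, (ρ e) ^ 2) / u ^ 2 := by
          simp_rw [div_pow]
          rw [← Finset.sum_div]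
        rw [heq, le_div_iff₀ (by positivity)] at hle
        linarith
    have hclaim2 : (1 - u) ^ 2 * M2 ≤ ∑ e ∈ E2, (ρ e) ^ 2 := by
      rcases eq_or_lt_of_le hu1 with h1 | h1
      · rw [h1]
        simpa using Finset.sum_nonneg fun (e : Sym2 V) _ => sq_nonneg (ρ e)
      · have ht1 : t < 1 := by
          by_contra h
          push_neg at h
          have : u = 1 := min_eq_right h
          exact absurd this (ne_of_lt h1)
        have hu_t : u = t := min_eq_left (le_of_lt ht1)
        have h1t : 0 < 1 - t := by linarith
        have hadm' : Adm Γ2 (fun e => ρ e / (1 - t)) := by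
          refine ⟨fun e => div_nonneg (hρ0 e) (le_of_lt h1t), fun γ2 hγ2 => ?_⟩
          rw [← Finset.sum_div, le_div_iff₀ h1t, one_mul]
          have hmem : γm ∪ γ2 ∈ Γ := hunion γm hγm γ2 hγ2
          have hadm2 := hρadm _ hmem
          have hd : Disjoint γm γ2 := hdisjE.mono (hT1 γm hγm).1 (hT2 γ2 hγ2).1
          rw [Finset.sum_union hd] at hadm2
          linarith
        have hle : M2 ≤ ∑ e ∈ E2, (ρ e / (1 - t)) ^ 2 :=
          csInf_le (mod2_set_bddBelow _ _) ⟨_, hadm', rfl⟩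
        have heq : ∑ e ∈ E2, (ρ e / (1 - t)) ^ 2 = (∑ e ∈ E2, (ρ e) ^ 2) / (1 - t) ^ 2 := by
          simp_rw [div_pow]
          rw [← Finset.sum_div]
        rw [heq, le_div_iff₀ (by positivity)] at hle
        rw [hu_t]
        linarith
    rw [hsplitsum, div_le_iff₀ hMsum]
    nlinarith [sq_nonneg (u * (M1 + M2) - M2), hM1pos, hM2pos, hclaim1, hclaim2]
  -- upper bound
  have hle : Mod2 G.edgeFinset Γ ≤ M1 * M2 / (M1 + M2) := by
    refine le_of_forall_pos_le_add ?_
    intro ε hε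
    have h1lt : sInf {x : ℝ | ∃ ρ, Adm Γ1 ρ ∧ x = ∑ e ∈ E1, (ρ e) ^ 2} < M1 + ε :=
      lt_add_of_pos_right M1 hε
    have h2lt : sInf {x : ℝ | ∃ ρ, Adm Γ2 ρ ∧ x = ∑ e ∈ E2, (ρ e) ^ 2} < M2 + ε :=
      lt_add_of_pos_right M2 hε
    obtain ⟨x1, hx1S, hx1lt⟩ := exists_lt_of_csInf_lt (mod2_set_nonempty E1 Γ1 hΓ1pos) h1lt
    obtain ⟨x2, hx2S, hx2lt⟩ := exists_lt_of_csInf_lt (mod2_set_nonempty E2 Γ2 hΓ2pos) h2lt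
    obtain ⟨ρ1, hρ1adm, hx1⟩ := hx1S
    obtain ⟨ρ2, hρ2adm, hx2⟩ := hx2S
    set a := M2 / (M1 + M2) with hadef
    set b := M1 / (M1 + M2) with hbdef
    have ha0 : 0 ≤ a := div_nonneg (le_of_lt hM2pos) (le_of_lt hMsum)
    have hb0 : 0 ≤ b := div_nonneg (le_of_lt hM1pos) (le_of_lt hMsum)
    have hab : a + b = 1 := by
      rw [hadef, hbdef, ← add_div, add_comm]
      exact div_self (ne_of_gt hMsum)
    set ρ := fun e => if e ∈ E1 then a * ρ1 e else b * ρ2 e with hρdef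
    have hadm : Adm Γ ρ := by
      refine ⟨fun e => ?_, fun γ hγ => ?_⟩
      · rw [hρdef]; dsimp only
        by_cases h : e ∈ E1
        · rw [if_pos h]; exact mul_nonneg ha0 (hρ1adm.1 e)
        · rw [if_neg h]; exact mul_nonneg hb0 (hρ2adm.1 e)
      · obtain ⟨hm1, hm2, hu, hd⟩ := hdecomp γ hγ
        have hsum : ∑ e ∈ γ, ρ e = ∑ e ∈ γ ∩ E1, ρ e + ∑ e ∈ γ ∩ E2, ρ e := by
          conv_lhs => rw [hu]
          exact Finset.sum_union hd
        have hs1 : ∑ e ∈ γ ∩ E1, ρ e = a * ∑ e ∈ γ ∩ E1, ρ1 e := by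
          rw [Finset.mul_sum]
          refine Finset.sum_congr rfl fun e he => ?_
          rw [hρdef]; dsimp only
          rw [if_pos (Finset.mem_inter.mp he).2]
        have hs2 : ∑ e ∈ γ ∩ E2, ρ e = b * ∑ e ∈ γ ∩ E2, ρ2 e := by
          rw [Finset.mul_sum]
          refine Finset.sum_congr rfl fun e he => ?_
          have he2 := (Finset.mem_inter.mp he).2
          have hne1 : e ∉ E1 := fun h => hdisj e h he2
          rw [hρdef]; dsimp only
          rw [if_neg hne1]
        have g1 : 1 ≤ ∑ e ∈ γ ∩ E1, ρ1 e := hρ1adm.2 _ hm1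
        have g2 : 1 ≤ ∑ e ∈ γ ∩ E2, ρ2 e := hρ2adm.2 _ hm2
        rw [hsum, hs1, hs2]
        calc (1 : ℝ) = a + b := hab.symm
          _ ≤ a * ∑ e ∈ γ ∩ E1, ρ1 e + b * ∑ e ∈ γ ∩ E2, ρ2 e :=
            add_le_add (le_mul_of_one_le_right ha0 g1) (le_mul_of_one_le_right hb0 g2)
    have hval : ∑ e ∈ G.edgeFinset, (ρ e) ^ 2 =
        a ^ 2 * (∑ e ∈ E1, (ρ1 e) ^ 2) + b ^ 2 * (∑ e ∈ E2, (ρ2 e) ^ 2) := by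
      rw [hEuniv, Finset.sum_union hdisjE]
      congr 1
      · rw [Finset.mul_sum]
        refine Finset.sum_congr rfl fun e he => ?_
        rw [hρdef]; dsimp only
        rw [if_pos he, mul_pow]
      · rw [Finset.mul_sum]
        refine Finset.sum_congr rfl fun e he => ?_
        have hne1 : e ∉ E1 := fun h => hdisj e h he
        rw [hρdef]; dsimp only
        rw [if_neg hne1, mul_pow]
    have hstep : Mod2 G.edgeFinset Γ ≤ ∑ e ∈ G.edgeFinset, (ρ e) ^ 2 :=
      csInf_le (mod2_set_bddBelow _ _) ⟨ρ, hadm, rfl⟩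
    have hH : a ^ 2 * M1 + b ^ 2 * M2 = M1 * M2 / (M1 + M2) := by
      rw [hadef, hbdef]
      field_simp
      ring
    have habsq : a ^ 2 + b ^ 2 ≤ 1 := by nlinarith [mul_nonneg ha0 hb0]
    calc Mod2 G.edgeFinset Γ ≤ ∑ e ∈ G.edgeFinset, (ρ e) ^ 2 := hstep
      _ = a ^ 2 * x1 + b ^ 2 * x2 := by rw [hval, ← hx1, ← hx2]
      _ ≤ a ^ 2 * (M1 + ε) + b ^ 2 * (M2 + ε) :=
        add_le_add (mul_le_mul_of_nonneg_left (le_of_lt hx1lt) (sq_nonneg a))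
          (mul_le_mul_of_nonneg_left (le_of_lt hx2lt) (sq_nonneg b))
      _ = (a ^ 2 * M1 + b ^ 2 * M2) + (a ^ 2 + b ^ 2) * ε := by ring
      _ ≤ M1 * M2 / (M1 + M2) + ε := by
        rw [hH]
        have : (a ^ 2 + b ^ 2) * ε ≤ 1 * ε :=
          mul_le_mul_of_nonneg_right habsq (le_of_lt hε)
        linarith
  have hMeq : Mod2 G.edgeFinset Γ = M1 * M2 / (M1 + M2) := le_antisymm hle hge
  rw [hMeq, inv_div]
  have hM1ne : M1 ≠ 0 := ne_of_gt hM1pos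
  have hM2ne : M2 ≠ 0 := ne_of_gt hM2pos
  field_simp
  ring

/-- serial rule at an articulation vertex. -/
theorem spanning_tree_serial_rule_articulation
    {V : Type*} [Fintype V] [DecidableEq V]
    (G : SimpleGraph V) (hG : G.Connected)
    (V₁ V₂ : Finset V) (v : V)
    (hcover : V₁ ∪ V₂ = Finset.univ) (hmeet : V₁ ∩ V₂ = {v})
    (hedges : ∀ e ∈ G.edgeFinset, (∀ x ∈ e, x ∈ V₁) ∨ (∀ x ∈ e, x ∈ V₂))
    (hconn₁ : (G.induce (↑V₁ : Set V)).Connected)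
    (hconn₂ : (G.induce (↑V₂ : Set V)).Connected)
    (hne₁ : (edgesWithin G V₁).Nonempty) (hne₂ : (edgesWithin G V₂).Nonempty) :
    (∀ γ : Finset (Sym2 V), ↑γ ⊆ G.edgeSet →
      (γ ∈ spanningTrees G ↔
        IsSpanningTreeOn G V₁ (γ ∩ edgesWithin G V₁) ∧
        IsSpanningTreeOn G V₂ (γ ∩ edgesWithin G V₂))) ∧
    (Mod2 G.edgeFinset (spanningTrees G))⁻¹ =
      (Mod2 (edgesWithin G V₁) (spanningTreesOn G V₁))⁻¹ +
      (Mod2 (edgesWithin G V₂) (spanningTreesOn G V₂))⁻¹ := by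
  exact ⟨fun γ hγ => serial_partA G V₁ V₂ v hcover hmeet hedges γ hγ,
    serial_partB G V₁ V₂ v hcover hmeet hedges hconn₁ hconn₂ hne₁ hne₂⟩
end
end

section
/- Let G = (V,E) be a finite connected simple graph with at least one edge. For every pmf μ on Γ_G, the expected overlap satisfies 𝔼_μ = |E| · Var(η_μ) + (|V| − 1)²/|E|, where Var(η) = (1/|E|)∑_{e∈E} η(e)² − ((1/|E|)∑_{e∈E} η(e))². Consequently, a pmf μ is MEO-optimal if and only if Var(η_μ) ≤ Var(η_ν) for every pmf ν on Γ_G; moreover, any two MEO-optimal pmfs μ*, ν* have the same edge usage function: η_{μ*} = η_{ν*}. -/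
noncomputable section
open scoped Classical
open Finset

variable {V : Type*} [Fintype V] [DecidableEq V]

section AuxMEO
variable {V : Type*} [Fintype V] [DecidableEq V]

lemma st_subset {G : SimpleGraph V} {γ : Finset (Sym2 V)}
    (h : γ ∈ spanningTrees G) : γ ⊆ G.edgeFinset := by
  rw [spanningTrees, Finset.mem_filter] at h
  exact fun e he => SimpleGraph.mem_edgeFinset.mpr (h.2.1 he)

lemma st_card {G : SimpleGraph V} {γ : Finset (Sym2 V)}
    (h : γ ∈ spanningTrees G) : γ.card = Fintype.card V - 1 := by
  rw [spanningTrees, Finset.mem_filter] at h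
  exact h.2.2.2

lemma eta_ite (Γ : Finset (Finset (Sym2 V))) (μ : Finset (Sym2 V) → ℝ) (e : Sym2 V) :
    eta Γ μ e = ∑ γ ∈ Γ, if e ∈ γ then μ γ else 0 := by
  rw [eta, Finset.sum_filter]

lemma EO_eq_sum_sq (G : SimpleGraph V) (μ : Finset (Sym2 V) → ℝ) :
    EO (spanningTrees G) μ = ∑ e ∈ G.edgeFinset, (eta (spanningTrees G) μ e) ^ 2 := by
  have key : ∀ γ ∈ spanningTrees G, ∀ γ' ∈ spanningTrees G,
      ((γ ∩ γ').card : ℝ) * μ γ * μ γ' =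
      ∑ e ∈ G.edgeFinset, (if e ∈ γ then μ γ else 0) * (if e ∈ γ' then μ γ' else 0) := by
    intro γ hγ γ' hγ'
    have h1 : ∀ e ∈ G.edgeFinset,
        (if e ∈ γ then μ γ else 0) * (if e ∈ γ' then μ γ' else 0)
        = if e ∈ γ ∩ γ' then μ γ * μ γ' else 0 := by
      intro e _
      by_cases h : e ∈ γ <;> by_cases h' : e ∈ γ' <;> simp [h, h']
    rw [Finset.sum_congr rfl h1, ← Finset.sum_filter, Finset.filter_mem_eq_inter,
      Finset.inter_eq_right.mpr (fun e he => st_subset hγ (Finset.mem_inter.mp he).1),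
      Finset.sum_const, nsmul_eq_mul]
    ring
  have hR : ∑ e ∈ G.edgeFinset, (eta (spanningTrees G) μ e) ^ 2
      = ∑ γ ∈ spanningTrees G, ∑ γ' ∈ spanningTrees G, ∑ e ∈ G.edgeFinset,
          (if e ∈ γ then μ γ else 0) * (if e ∈ γ' then μ γ' else 0) := by
    simp only [eta_ite, sq, Finset.sum_mul_sum]
    rw [Finset.sum_comm]
    exact Finset.sum_congr rfl fun γ _ => Finset.sum_comm
  rw [hR, EO]
  exact Finset.sum_congr rfl fun γ hγ => Finset.sum_congr rfl fun γ' hγ' => key γ hγ γ' hγ'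

lemma sum_eta (G : SimpleGraph V) {μ : Finset (Sym2 V) → ℝ}
    (hμ : IsPmf (spanningTrees G) μ) (hV : 1 ≤ Fintype.card V) :
    ∑ e ∈ G.edgeFinset, eta (spanningTrees G) μ e = (Fintype.card V : ℝ) - 1 := by
  simp only [eta_ite]
  rw [Finset.sum_comm]
  have h : ∀ γ ∈ spanningTrees G,
      (∑ e ∈ G.edgeFinset, if e ∈ γ then μ γ else 0) = ((Fintype.card V : ℝ) - 1) * μ γ := by
    intro γ hγ
    rw [← Finset.sum_filter, Finset.filter_mem_eq_inter,
      Finset.inter_eq_right.mpr (st_subset hγ), Finset.sum_const, st_card hγ,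
      nsmul_eq_mul, Nat.cast_sub hV, Nat.cast_one]
  rw [Finset.sum_congr rfl h, ← Finset.mul_sum, hμ.2.2, mul_one]

end AuxMEO

/-- The variance of edge usage probabilities over the edges of `G`. -/
def Var {V : Type*} [Fintype V] [DecidableEq V] (G : SimpleGraph V) (η : Sym2 V → ℝ) : ℝ :=
  (∑ e ∈ G.edgeFinset, (η e) ^ 2) / (G.edgeFinset.card : ℝ) -
    ((∑ e ∈ G.edgeFinset, η e) / (G.edgeFinset.card : ℝ)) ^ 2

/-- `𝔼_μ = |E|·Var(η_μ) + (|V|-1)²/|E|`; a pmf is MEO-optimal iff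
its edge usage variance is minimal; and all MEO-optimal pmfs share the same
edge usage function. -/
theorem expected_overlap_variance_decomposition
    {V : Type*} [Fintype V] [DecidableEq V]
    (G : SimpleGraph V) (hG : G.Connected) (hE : G.edgeFinset.Nonempty) :
    (∀ μ, IsPmf (spanningTrees G) μ →
      EO (spanningTrees G) μ =
        (G.edgeFinset.card : ℝ) * Var G (eta (spanningTrees G) μ) +
          ((Fintype.card V : ℝ) - 1) ^ 2 / (G.edgeFinset.card : ℝ)) ∧
    (∀ μ, IsPmf (spanningTrees G) μ →
      (EO (spanningTrees G) μ = MEO (spanningTrees G) ↔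
        ∀ ν, IsPmf (spanningTrees G) ν →
          Var G (eta (spanningTrees G) μ) ≤ Var G (eta (spanningTrees G) ν))) ∧
    (∀ μ ν, IsPmf (spanningTrees G) μ → IsPmf (spanningTrees G) ν →
      EO (spanningTrees G) μ = MEO (spanningTrees G) →
      EO (spanningTrees G) ν = MEO (spanningTrees G) →
      eta (spanningTrees G) μ = eta (spanningTrees G) ν) := by
  have hVne : Nonempty V := hG.nonempty
  have hV : 1 ≤ Fintype.card V := Fintype.card_pos
  have hm : (0:ℝ) < (G.edgeFinset.card : ℝ) := by
    exact_mod_cast Finset.card_pos.mpr hE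
  have hm' : (G.edgeFinset.card : ℝ) ≠ 0 := ne_of_gt hm
  have part1 : ∀ μ, IsPmf (spanningTrees G) μ →
      EO (spanningTrees G) μ =
        (G.edgeFinset.card : ℝ) * Var G (eta (spanningTrees G) μ) +
          ((Fintype.card V : ℝ) - 1) ^ 2 / (G.edgeFinset.card : ℝ) := by
    intro μ hμ
    have halg : ∀ S n m : ℝ, m ≠ 0 → S = m * (S / m - (n / m) ^ 2) + n ^ 2 / m := by
      intro S n m hm0
      field_simp
      ring
    rw [EO_eq_sum_sq, Var, sum_eta G hμ hV]
    exact halg _ _ _ hm' 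
  have hbdd : BddBelow {x : ℝ | ∃ μ, IsPmf (spanningTrees G) μ ∧ x = EO (spanningTrees G) μ} := by
    refine ⟨0, ?_⟩
    rintro x ⟨μ, hμ, rfl⟩
    rw [EO_eq_sum_sq]
    exact Finset.sum_nonneg fun e _ => sq_nonneg _
  have hle : ∀ μ, IsPmf (spanningTrees G) μ → MEO (spanningTrees G) ≤ EO (spanningTrees G) μ := by
    intro μ hμ
    exact csInf_le hbdd ⟨μ, hμ, rfl⟩
  have EOmono : ∀ μ ν, IsPmf (spanningTrees G) μ → IsPmf (spanningTrees G) ν →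
      (EO (spanningTrees G) μ ≤ EO (spanningTrees G) ν ↔
        Var G (eta (spanningTrees G) μ) ≤ Var G (eta (spanningTrees G) ν)) := by
    intro μ ν hμ hν
    rw [part1 μ hμ, part1 ν hν, add_le_add_iff_right, mul_le_mul_iff_right₀ hm]
  refine ⟨part1, ?_, ?_⟩
  · intro μ hμ
    constructor
    · intro hopt ν hν
      have h := hle ν hν
      rw [← hopt] at h
      exact (EOmono μ ν hμ hν).mp h
    · intro h
      refine le_antisymm (le_csInf ⟨_, μ, hμ, rfl⟩ ?_) (hle μ hμ)
      rintro x ⟨ν, hν, rfl⟩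
      exact (EOmono μ ν hμ hν).mpr (h ν hν)
  · intro μ ν hμ hν hμo hνo
    set lam : Finset (Sym2 V) → ℝ := fun γ => (μ γ + ν γ) / 2 with hlam
    have hlamPmf : IsPmf (spanningTrees G) lam := by
      refine ⟨fun γ => div_nonneg (add_nonneg (hμ.1 γ) (hν.1 γ)) (by norm_num),
        fun γ h => by simp [hlam, hμ.2.1 γ h, hν.2.1 γ h], ?_⟩
      simp only [hlam, ← Finset.sum_div, Finset.sum_add_distrib, hμ.2.2, hν.2.2]
      norm_num
    have hetalam : ∀ e, eta (spanningTrees G) lam e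
        = (eta (spanningTrees G) μ e + eta (spanningTrees G) ν e) / 2 := by
      intro e
      simp only [eta, hlam]
      rw [← Finset.sum_div, ← Finset.sum_add_distrib]
    have hexp : EO (spanningTrees G) lam =
        (EO (spanningTrees G) μ + EO (spanningTrees G) ν) / 2 -
          (1/4) * ∑ e ∈ G.edgeFinset,
            (eta (spanningTrees G) μ e - eta (spanningTrees G) ν e) ^ 2 := by
      rw [EO_eq_sum_sq, EO_eq_sum_sq, EO_eq_sum_sq]
      simp only [hetalam]
      rw [Finset.mul_sum, ← Finset.sum_add_distrib, Finset.sum_div, ← Finset.sum_sub_distrib]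
      exact Finset.sum_congr rfl fun e _ => by ring
    have h1 := hle lam hlamPmf
    have hsum_le : ∑ e ∈ G.edgeFinset,
        (eta (spanningTrees G) μ e - eta (spanningTrees G) ν e) ^ 2 ≤ 0 := by
      rw [hexp, hμo, hνo] at h1
      linarith
    have hsum_ge : (0:ℝ) ≤ ∑ e ∈ G.edgeFinset,
        (eta (spanningTrees G) μ e - eta (spanningTrees G) ν e) ^ 2 :=
      Finset.sum_nonneg fun e _ => sq_nonneg _
    have hz := (Finset.sum_eq_zero_iff_of_nonneg (fun e _ => sq_nonneg _)).mp
      (le_antisymm hsum_le hsum_ge)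
    funext e
    by_cases he : e ∈ G.edgeFinset
    · have h0 := hz e he
      have := pow_eq_zero_iff (n := 2) (by norm_num) |>.mp h0
      linarith [sub_eq_zero.mp this]
    · have hfe : ∀ (μ' : Finset (Sym2 V) → ℝ), eta (spanningTrees G) μ' e = 0 := by
        intro μ'
        rw [eta, Finset.filter_eq_empty_iff.mpr (fun {γ} hγ hin => he (st_subset hγ hin)),
          Finset.sum_empty]
      rw [hfe, hfe]
end
end

section
/- Let G = (V,E) be a finite connected simple graph with at least one edge, let μ* be an MEO-optimal pmf on Γ_G, and let η* = η_{μ*}. Then for every feasible partition P of G one has ∑_{e∈E_P} η*(e) ≥ k_P − 1; moreover, if every fair spanning tree γ of G satisfies |γ ∩ E_P| = k_P − 1, then ∑_{e∈E_P} η*(e) = k_P − 1. In particular, there exists an edge e ∈ E_P with η*(e) ≥ (k_P − 1)/|E_P|. -/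
noncomputable section
open scoped Classical
open Finset

variable {V : Type*} [Fintype V] [DecidableEq V]

set_option maxHeartbeats 1000000

namespace MEOAux
open SimpleGraph

variable {W : Type*}

lemma reach_sup_single {G : SimpleGraph W} {a b u v : W}
    (h : (G ⊔ SimpleGraph.fromEdgeSet {s(a,b)}).Reachable u v) :
    G.Reachable u v ∨ (G.Reachable u a ∧ G.Reachable b v) ∨
      (G.Reachable u b ∧ G.Reachable a v) := by
  rw [SimpleGraph.reachable_iff_reflTransGen] at h
  induction h with
  | refl => exact Or.inl (Reachable.refl u)
  | tail hxy hadj ih =>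
    rename_i x y
    have hadj' : G.Adj x y ∨ (x = a ∧ y = b) ∨ (x = b ∧ y = a) := by
      rcases hadj with h1 | h2
      · exact Or.inl h1
      · rw [SimpleGraph.fromEdgeSet_adj] at h2
        rcases h2 with ⟨hm, -⟩
        simp only [Set.mem_singleton_iff, Sym2.eq_iff] at hm
        exact Or.inr hm
    rcases hadj' with hG | ⟨hxa, hyb⟩ | ⟨hxb, hya⟩
    · rcases ih with h1 | ⟨h1, h2⟩ | ⟨h1, h2⟩
      · exact Or.inl (h1.trans hG.reachable)
      · exact Or.inr (Or.inl ⟨h1, h2.trans hG.reachable⟩)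
      · exact Or.inr (Or.inr ⟨h1, h2.trans hG.reachable⟩)
    · subst hxa; subst hyb
      rcases ih with h1 | ⟨h1, h2⟩ | ⟨h1, h2⟩
      · exact Or.inr (Or.inl ⟨h1, Reachable.refl _⟩)
      · exact Or.inr (Or.inl ⟨h1, Reachable.refl _⟩)
      · exact Or.inl h1
    · subst hxb; subst hya
      rcases ih with h1 | ⟨h1, h2⟩ | ⟨h1, h2⟩
      · exact Or.inr (Or.inr ⟨h1, Reachable.refl _⟩)
      · exact Or.inl h1
      · exact Or.inr (Or.inr ⟨h1, Reachable.refl _⟩)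

lemma card_le_of_almost_inj {α β : Type*} [Fintype α] [Fintype β] (f : α → β) (x y : α)
    (h : ∀ c d, f c = f d → c = d ∨ (c = x ∧ d = y) ∨ (c = y ∧ d = x))
    (hs : Function.Surjective f) : Nat.card α ≤ Nat.card β + 1 := by
  rw [Nat.card_eq_fintype_card, Nat.card_eq_fintype_card, ← Nat.sub_le_iff_le_add]
  have : (Finset.univ.erase y).card ≤ (Finset.univ : Finset β).card := by
    apply Finset.card_le_card_of_injOn f (fun a _ => Finset.mem_univ _)
    intro c hc d hd hfd
    rw [Finset.mem_coe, Finset.mem_erase] at hc hd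
    rcases h c d hfd with h1 | ⟨h1, h2⟩ | ⟨h1, h2⟩
    · exact h1
    · exact absurd h2 hd.1
    · exact absurd h1 hc.1
  simpa [Finset.card_erase_of_mem, Finset.card_univ] using this

lemma card_le_comp {W : Type*} [Fintype W] (s : Finset (Sym2 W)) :
    Fintype.card W ≤ s.card +
      Nat.card (SimpleGraph.fromEdgeSet (↑s : Set (Sym2 W))).ConnectedComponent := by
  induction s using Finset.induction_on with
  | empty =>
    simp only [Finset.card_empty, Finset.coe_empty, SimpleGraph.fromEdgeSet_empty, zero_add]
    rw [Nat.card_eq_fintype_card]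
    apply Fintype.card_le_of_injective (⊥ : SimpleGraph W).connectedComponentMk
    intro u v huv
    exact (SimpleGraph.reachable_bot).mp (SimpleGraph.ConnectedComponent.exact huv)
  | @insert e t hnot ih =>
    have hsplit : SimpleGraph.fromEdgeSet (↑(insert e t) : Set (Sym2 W)) =
        SimpleGraph.fromEdgeSet (↑t : Set (Sym2 W)) ⊔ SimpleGraph.fromEdgeSet {e} := by
      rw [Finset.coe_insert, Set.insert_eq, SimpleGraph.fromEdgeSet_union, sup_comm]
    rw [Finset.card_insert_of_notMem hnot, hsplit]
    induction e using Sym2.ind with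
    | _ a b =>
      by_cases hab : a = b
      · have hbot : SimpleGraph.fromEdgeSet ({s(a,b)} : Set (Sym2 W)) = ⊥ := by
          subst hab
          ext u v
          simp only [SimpleGraph.fromEdgeSet_adj, Set.mem_singleton_iff, Sym2.eq_iff,
            SimpleGraph.bot_adj, iff_false, not_and, ne_eq]
          rintro (⟨rfl, rfl⟩ | ⟨rfl, rfl⟩) h <;> exact h rfl
        rw [hbot, sup_bot_eq]
        omega
      · set G := SimpleGraph.fromEdgeSet (↑t : Set (Sym2 W)) with hG
        set G' := G ⊔ SimpleGraph.fromEdgeSet ({s(a,b)} : Set (Sym2 W)) with hG'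
        have key : Nat.card G.ConnectedComponent ≤
            Nat.card G'.ConnectedComponent + 1 := by
          classical
          letI : Fintype G.ConnectedComponent := Fintype.ofFinite _
          letI : Fintype G'.ConnectedComponent := Fintype.ofFinite _
          apply card_le_of_almost_inj
            (SimpleGraph.ConnectedComponent.map (SimpleGraph.Hom.ofLE le_sup_left))
            (G.connectedComponentMk a) (G.connectedComponentMk b)
          · intro c d
            refine SimpleGraph.ConnectedComponent.ind₂ (fun u v hf => ?_) c d
            rw [SimpleGraph.ConnectedComponent.map_mk, SimpleGraph.ConnectedComponent.map_mk] at hf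
            have hr : G'.Reachable u v := SimpleGraph.ConnectedComponent.exact hf
            rcases reach_sup_single hr with h1 | ⟨h1, h2⟩ | ⟨h1, h2⟩
            · exact Or.inl (SimpleGraph.ConnectedComponent.sound h1)
            · exact Or.inr (Or.inl ⟨SimpleGraph.ConnectedComponent.sound h1,
                SimpleGraph.ConnectedComponent.sound h2.symm⟩)
            · exact Or.inr (Or.inr ⟨SimpleGraph.ConnectedComponent.sound h1,
                SimpleGraph.ConnectedComponent.sound h2.symm⟩)
          · intro c'
            refine SimpleGraph.ConnectedComponent.ind (fun v => ?_) c'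
            exact ⟨G.connectedComponentMk v, SimpleGraph.ConnectedComponent.map_mk _ _⟩
        omega

/-- A connected graph on `α` whose edges form the finset `s` satisfies `card α ≤ s.card + 1`. -/
lemma conn_card_le {α : Type*} [Fintype α] (H : SimpleGraph α) (hH : H.Connected)
    (s : Finset (Sym2 α)) (hs : H = SimpleGraph.fromEdgeSet ↑s) :
    Fintype.card α ≤ s.card + 1 := by
  have h1 := card_le_comp s
  rw [← hs] at h1
  have h2 : Nat.card H.ConnectedComponent = 1 := by
    haveI : Subsingleton H.ConnectedComponent :=
      ⟨SimpleGraph.ConnectedComponent.ind₂ (fun u v =>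
        SimpleGraph.ConnectedComponent.sound (hH.preconnected u v))⟩
    haveI : Nonempty H.ConnectedComponent := by
      obtain ⟨v⟩ := hH.nonempty
      exact ⟨H.connectedComponentMk v⟩
    exact Nat.card_eq_one_iff_unique.mpr ⟨inferInstance, inferInstance⟩
  omega

end MEOAux
section PartB
variable {V : Type*} [Fintype V] [DecidableEq V]

open SimpleGraph MEOAux

lemma tree_cut_card (G : SimpleGraph V) (P : Finset (Finset V))
    (hP : IsFeasiblePartition G P) {γ : Finset (Sym2 V)}
    (hγ : γ ∈ spanningTrees G) :
    P.card - 1 ≤ (γ ∩ cutEdges G P).card := by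
  rw [spanningTrees, Finset.mem_filter] at hγ
  obtain ⟨-, hsub, hconn, -⟩ := hγ
  obtain ⟨hP2, hne, hpart, -⟩ := hP
  -- the part containing each vertex
  set pt : V → Finset V := fun v => (hpart v).choose with hpt
  have hspec : ∀ v : V, (pt v ∈ P ∧ v ∈ pt v) ∧ ∀ q, q ∈ P ∧ v ∈ q → q = pt v :=
    fun v => (hpart v).choose_spec
  have pmem : ∀ v, pt v ∈ P := fun v => (hspec v).1.1
  have vmem : ∀ v, v ∈ pt v := fun v => (hspec v).1.2
  have puniq : ∀ v p, p ∈ P → v ∈ p → p = pt v := fun v p h1 h2 => (hspec v).2 p ⟨h1, h2⟩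
  -- the quotient graph on parts
  let H : SimpleGraph {p : Finset V // p ∈ P} :=
    { Adj := fun p q => p ≠ q ∧ ∃ x ∈ (p : Finset V), ∃ y ∈ (q : Finset V), s(x, y) ∈ γ
      symm := ⟨by
        rintro p q ⟨hne', x, hx, y, hy, hxy⟩
        exact ⟨hne'.symm, y, hy, x, hx, by rwa [Sym2.eq_swap]⟩⟩
      loopless := ⟨fun p h => h.1 rfl⟩ }
  have hHadj : ∀ p q, H.Adj p q ↔
      p ≠ q ∧ ∃ x ∈ (p : Finset V), ∃ y ∈ (q : Finset V), s(x, y) ∈ γ := fun _ _ => Iff.rfl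
  -- H is connected
  have hHconn : H.Connected := by
    have hnonempty : Nonempty {p : Finset V // p ∈ P} := by
      obtain ⟨p, hp⟩ := Finset.card_pos.mp (by omega : 0 < P.card)
      exact ⟨⟨p, hp⟩⟩
    haveI := hnonempty
    refine SimpleGraph.Connected.mk ?_
    intro p q
    obtain ⟨a, ha⟩ := hne p.1 p.2
    obtain ⟨b, hb⟩ := hne q.1 q.2
    have claim : ∀ u v : V, (SimpleGraph.fromEdgeSet (↑γ : Set (Sym2 V))).Reachable u v →
        H.Reachable ⟨pt u, pmem u⟩ ⟨pt v, pmem v⟩ := by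
      intro u v huv
      rw [SimpleGraph.reachable_iff_reflTransGen] at huv
      induction huv with
      | refl => exact Reachable.refl _
      | tail hxy hadj ih =>
        rename_i x y
        rw [SimpleGraph.fromEdgeSet_adj] at hadj
        by_cases hxyeq : pt x = pt y
        · have : (⟨pt x, pmem x⟩ : {p : Finset V // p ∈ P}) = ⟨pt y, pmem y⟩ :=
            Subtype.ext hxyeq
          rwa [this] at ih
        · refine ih.trans (SimpleGraph.Adj.reachable ?_)
          refine ⟨fun hcon => hxyeq (congrArg Subtype.val hcon), x, vmem x, y, vmem y, ?_⟩
          exact hadj.1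
    have h1 := claim a b (hconn.preconnected a b)
    have hpa : (⟨pt a, pmem a⟩ : {p : Finset V // p ∈ P}) = p :=
      Subtype.ext (puniq a p.1 p.2 ha).symm
    have hpb : (⟨pt b, pmem b⟩ : {p : Finset V // p ∈ P}) = q :=
      Subtype.ext (puniq b q.1 q.2 hb).symm
    rwa [hpa, hpb] at h1
  -- edge-count bound for H
  have hcard : Fintype.card {p : Finset V // p ∈ P} ≤ H.edgeFinset.card + 1 := by
    refine conn_card_le H hHconn H.edgeFinset ?_
    rw [SimpleGraph.coe_edgeFinset, SimpleGraph.fromEdgeSet_edgeSet]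
  have hcardP : Fintype.card {p : Finset V // p ∈ P} = P.card := Fintype.card_coe P
  -- surjection from cut edges of γ onto edges of H
  have hsurj : H.edgeFinset.card ≤ (γ ∩ cutEdges G P).card := by
    apply Finset.card_le_card_of_surjOn
      (Sym2.map (fun v : V => (⟨pt v, pmem v⟩ : {p : Finset V // p ∈ P})))
    intro ee
    induction ee using Sym2.ind with
    | _ p q =>
      intro hee
      rw [Finset.mem_coe, SimpleGraph.mem_edgeFinset, SimpleGraph.mem_edgeSet] at hee
      obtain ⟨hpq, x, hx, y, hy, hxy⟩ := hee
      have hpx : (p : Finset V) = pt x := puniq x p.1 p.2 hx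
      have hqy : (q : Finset V) = pt y := puniq y q.1 q.2 hy
      refine ⟨s(x, y), ?_, ?_⟩
      · rw [Finset.mem_coe, Finset.mem_inter]
        refine ⟨hxy, ?_⟩
        rw [cutEdges, Finset.mem_filter]
        constructor
        · rw [SimpleGraph.mem_edgeFinset]
          exact hsub hxy
        · rintro ⟨r, hr, hrmem⟩
          have hxr : x ∈ r := hrmem x (Sym2.mem_mk_left x y)
          have hyr : y ∈ r := hrmem y (Sym2.mem_mk_right x y)
          have h1 : r = pt x := puniq x r hr hxr
          have h2 : r = pt y := puniq y r hr hyr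
          exact hpq (Subtype.ext (by rw [hpx, hqy, ← h1, ← h2]))
      · show Sym2.map _ s(x, y) = s(p, q)
        have e1 : (⟨pt x, pmem x⟩ : {p : Finset V // p ∈ P}) = p := Subtype.ext hpx.symm
        have e2 : (⟨pt y, pmem y⟩ : {p : Finset V // p ∈ P}) = q := Subtype.ext hqy.symm
        rw [Sym2.map_pair_eq, e1, e2]
  omega

end PartB
lemma sum_eta_eq {V : Type*} [Fintype V] [DecidableEq V] (Γ : Finset (Finset (Sym2 V)))
    (μ : Finset (Sym2 V) → ℝ) (s : Finset (Sym2 V)) :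
    ∑ e ∈ s, eta Γ μ e = ∑ γ ∈ Γ, ((γ ∩ s).card : ℝ) * μ γ := by
  unfold eta
  simp_rw [Finset.sum_filter]
  rw [Finset.sum_comm]
  refine Finset.sum_congr rfl (fun γ _ => ?_)
  rw [← Finset.sum_filter, Finset.sum_const]
  have h : s.filter (fun e => e ∈ γ) = γ ∩ s := by
    ext e; simp only [Finset.mem_filter, Finset.mem_inter]; tauto
  rw [h, nsmul_eq_mul]

/-- for an MEO-optimal pmf and a feasible partition `P`,
`∑_{e ∈ E_P} η*(e) ≥ k_P - 1`, with equality if every fair tree uses exactly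
`k_P - 1` edges of `E_P`; in particular some `e ∈ E_P` has
`η*(e) ≥ (k_P - 1)/|E_P|`. -/
theorem feasible_partition_usage_bound
    {V : Type*} [Fintype V] [DecidableEq V]
    (G : SimpleGraph V) (hG : G.Connected) (hE : G.edgeFinset.Nonempty)
    (μ : Finset (Sym2 V) → ℝ) (hμ : IsPmf (spanningTrees G) μ)
    (hopt : EO (spanningTrees G) μ = MEO (spanningTrees G))
    (P : Finset (Finset V)) (hP : IsFeasiblePartition G P) :
    ((P.card : ℝ) - 1) ≤ ∑ e ∈ cutEdges G P, eta (spanningTrees G) μ e ∧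
    ((∀ γ, IsFair G γ → (γ ∩ cutEdges G P).card = P.card - 1) →
      ∑ e ∈ cutEdges G P, eta (spanningTrees G) μ e = (P.card : ℝ) - 1) ∧
    ∃ e ∈ cutEdges G P,
      ((P.card : ℝ) - 1) / ((cutEdges G P).card : ℝ) ≤ eta (spanningTrees G) μ e := by
  
  obtain ⟨hnn, hzero, hsum1⟩ := hμ
  have hcast : ((P.card - 1 : ℕ) : ℝ) = (P.card : ℝ) - 1 := by
    have h1 : 1 ≤ P.card := le_trans one_le_two hP.1
    push_cast [h1]
    ring
  have key : ∀ γ ∈ spanningTrees G, ((P.card : ℝ) - 1) ≤ ((γ ∩ cutEdges G P).card : ℝ) := by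
    intro γ hγ
    rw [← hcast]
    exact_mod_cast tree_cut_card G P hP hγ
  have hsum : ∑ e ∈ cutEdges G P, eta (spanningTrees G) μ e =
      ∑ γ ∈ spanningTrees G, ((γ ∩ cutEdges G P).card : ℝ) * μ γ :=
    sum_eta_eq _ _ _
  have hge : ((P.card : ℝ) - 1) ≤ ∑ e ∈ cutEdges G P, eta (spanningTrees G) μ e := by
    rw [hsum]
    calc ((P.card : ℝ) - 1) = ∑ γ ∈ spanningTrees G, ((P.card : ℝ) - 1) * μ γ := by
          rw [← Finset.mul_sum, hsum1, mul_one]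
      _ ≤ ∑ γ ∈ spanningTrees G, ((γ ∩ cutEdges G P).card : ℝ) * μ γ :=
          Finset.sum_le_sum (fun γ hγ => mul_le_mul_of_nonneg_right (key γ hγ) (hnn γ))
  refine ⟨hge, ?_, ?_⟩
  · intro hfair
    rw [hsum]
    have hterm : ∀ γ ∈ spanningTrees G,
        ((γ ∩ cutEdges G P).card : ℝ) * μ γ = ((P.card : ℝ) - 1) * μ γ := by
      intro γ _
      rcases eq_or_lt_of_le (hnn γ) with h0 | hpos
      · rw [← h0, mul_zero, mul_zero]
      · have hfγ : IsFair G γ := ⟨μ, ⟨hnn, hzero, hsum1⟩, hopt, hpos⟩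
        rw [hfair γ hfγ, hcast]
    rw [Finset.sum_congr rfl hterm, ← Finset.mul_sum, hsum1, mul_one]
  · have hcutne : (cutEdges G P).Nonempty := by
      rw [Finset.nonempty_iff_ne_empty]
      intro hempty
      rw [hempty, Finset.sum_empty] at hge
      have h2 : (2 : ℝ) ≤ (P.card : ℝ) := by exact_mod_cast hP.1
      linarith
    have hcne : ((cutEdges G P).card : ℝ) ≠ 0 := by
      exact_mod_cast Finset.card_ne_zero.mpr hcutne
    have hconst : ∑ _e ∈ cutEdges G P, (((P.card : ℝ) - 1) / ((cutEdges G P).card : ℝ)) ≤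
        ∑ e ∈ cutEdges G P, eta (spanningTrees G) μ e := by
      rw [Finset.sum_const, nsmul_eq_mul, mul_div_cancel₀ _ hcne]
      exact hge
    exact Finset.exists_le_of_sum_le hcutne hconst
end
end

section
/- Let G = (V,E) be a finite connected simple graph with at least one edge, let μ* be an MEO-optimal pmf on Γ_G, and let η* = η_{μ*}. Let γ* be a spanning tree with μ*(γ*) > 0, let e' = {x,y} be an edge of G not in γ*, and let C be the cycle formed by adding e' to γ* (i.e., e' together with the unique path in γ* from x to y). Then η*(e') = max_{e∈C} η*(e); equivalently, η*(e) ≤ η*(e') for every edge e on the unique path in γ* from x to y. -/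
noncomputable section
open scoped Classical
open Finset

variable {V : Type*} [Fintype V] [DecidableEq V]

set_option linter.unusedSectionVars false

lemma EO_nonneg' (Γ : Finset (Finset (Sym2 V))) (σ : Finset (Sym2 V) → ℝ) (h : IsPmf Γ σ) :
    0 ≤ EO Γ σ := by
  apply Finset.sum_nonneg; intro γ _
  apply Finset.sum_nonneg; intro δ _
  exact mul_nonneg (mul_nonneg (Nat.cast_nonneg _) (h.1 γ)) (h.1 δ)

lemma MEO_le' (Γ : Finset (Finset (Sym2 V))) (σ : Finset (Sym2 V) → ℝ) (h : IsPmf Γ σ) :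
    MEO Γ ≤ EO Γ σ := by
  apply csInf_le
  · exact ⟨0, fun z hz => by obtain ⟨ρ, hρ, rfl⟩ := hz; exact EO_nonneg' Γ ρ hρ⟩
  · exact ⟨σ, h, rfl⟩

lemma sum_card_inter' (Γ : Finset (Finset (Sym2 V))) (σ : Finset (Sym2 V) → ℝ)
    (τ : Finset (Sym2 V)) :
    ∑ γ ∈ Γ, ((γ ∩ τ).card : ℝ) * σ γ = ∑ f ∈ τ, eta Γ σ f := by
  have hcard : ∀ γ : Finset (Sym2 V), ((γ ∩ τ).card : ℝ)
      = ∑ f ∈ τ, (if f ∈ γ then (1:ℝ) else 0) := by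
    intro γ
    rw [Finset.inter_comm, ← Finset.filter_mem_eq_inter, Finset.card_filter]
    push_cast
    rfl
  calc ∑ γ ∈ Γ, ((γ ∩ τ).card : ℝ) * σ γ
      = ∑ γ ∈ Γ, ∑ f ∈ τ, (if f ∈ γ then (1:ℝ) else 0) * σ γ := by
        refine Finset.sum_congr rfl fun γ _ => ?_
        rw [hcard γ, Finset.sum_mul]
    _ = ∑ f ∈ τ, ∑ γ ∈ Γ, (if f ∈ γ then (1:ℝ) else 0) * σ γ := Finset.sum_comm
    _ = ∑ f ∈ τ, eta Γ σ f := by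
        refine Finset.sum_congr rfl fun f _ => ?_
        rw [eta, Finset.sum_filter]
        refine Finset.sum_congr rfl fun γ _ => ?_
        by_cases h : f ∈ γ <;> simp [h]

lemma tree_exchange' (G : SimpleGraph V) (γstar : Finset (Sym2 V)) (hγ : γstar ∈ spanningTrees G)
    (x y : V) (hxy : G.Adj x y) (hnot : s(x, y) ∉ γstar)
    (p : (SimpleGraph.fromEdgeSet (↑γstar : Set (Sym2 V))).Walk x y) (hp : p.IsPath)
    (a b : V) (he : s(a, b) ∈ p.edges) :
    insert s(x,y) (γstar.erase s(a,b)) ∈ spanningTrees G := by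
  classical
  simp only [spanningTrees, Finset.mem_filter, Finset.mem_univ, true_and] at hγ ⊢
  obtain ⟨hsub, hconn, hcard⟩ := hγ
  have heγ : s(a, b) ∈ γstar := by
    have := p.edges_subset_edgeSet he
    rw [SimpleGraph.edgeSet_fromEdgeSet] at this
    exact Finset.mem_coe.mp this.1
  set γ2 : Finset (Sym2 V) := insert s(x,y) (γstar.erase s(a,b)) with hγ2def
  set K := SimpleGraph.fromEdgeSet (insert s(x,y) (↑γstar : Set (Sym2 V))) with hKdef
  have hKadj : K.Adj x y := by
    rw [hKdef, SimpleGraph.fromEdgeSet_adj]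
    exact ⟨Set.mem_insert _ _, hxy.ne⟩
  have hpe : ∀ f ∈ p.edges, f ∈ K.edgeSet := by
    intro f hf
    have := p.edges_subset_edgeSet hf
    rw [SimpleGraph.edgeSet_fromEdgeSet] at this
    rw [hKdef, SimpleGraph.edgeSet_fromEdgeSet]
    exact ⟨Set.mem_insert_of_mem _ this.1, this.2⟩
  set q := (p.transfer K hpe).reverse with hqdef
  have hxy_not_q : s(x,y) ∉ q.edges := by
    rw [hqdef, SimpleGraph.Walk.edges_reverse, List.mem_reverse,
      SimpleGraph.Walk.edges_transfer]
    intro hmem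
    have := p.edges_subset_edgeSet hmem
    rw [SimpleGraph.edgeSet_fromEdgeSet] at this
    exact hnot (Finset.mem_coe.mp this.1)
  have hcyc : (SimpleGraph.Walk.cons hKadj q).IsCycle := by
    rw [SimpleGraph.Walk.cons_isCycle_iff]
    exact ⟨(hp.transfer hpe).reverse, hxy_not_q⟩
  have hec : s(a, b) ∈ (SimpleGraph.Walk.cons hKadj q).edges := by
    rw [SimpleGraph.Walk.edges_cons, List.mem_cons]
    right
    rw [hqdef, SimpleGraph.Walk.edges_reverse, List.mem_reverse,
      SimpleGraph.Walk.edges_transfer]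
    exact he
  have hreach : (K \ SimpleGraph.fromEdgeSet {s(a,b)}).Reachable a b :=
    (SimpleGraph.adj_and_reachable_delete_edges_iff_exists_cycle.mpr
      ⟨x, SimpleGraph.Walk.cons hKadj q, hcyc, hec⟩).2
  set H := SimpleGraph.fromEdgeSet (↑γ2 : Set (Sym2 V)) with hHdef
  have hle : K \ SimpleGraph.fromEdgeSet {s(a,b)} ≤ H := by
    intro u v huv
    rw [SimpleGraph.sdiff_adj, SimpleGraph.fromEdgeSet_adj, SimpleGraph.fromEdgeSet_adj] at huv
    rw [hHdef, SimpleGraph.fromEdgeSet_adj]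
    obtain ⟨⟨hmem, hne⟩, hnmem⟩ := huv
    have hneq : s(u,v) ≠ s(a,b) := by
      intro hcontra
      exact hnmem ⟨by simp [hcontra], hne⟩
    refine ⟨?_, hne⟩
    rcases Set.mem_insert_iff.mp hmem with h | h
    · have : s(u,v) ∈ γ2 := by rw [hγ2def, h]; exact Finset.mem_insert_self _ _
      exact Finset.mem_coe.mpr this
    · have : s(u,v) ∈ γ2 := by
        rw [hγ2def]
        exact Finset.mem_insert_of_mem (Finset.mem_erase.mpr ⟨hneq, Finset.mem_coe.mp h⟩)
      exact Finset.mem_coe.mpr this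
  have hreachH : H.Reachable a b := hreach.mono hle
  have hstep : ∀ u v : V, (SimpleGraph.fromEdgeSet (↑γstar : Set (Sym2 V))).Adj u v →
      H.Reachable u v := by
    intro u v huv
    rw [SimpleGraph.fromEdgeSet_adj] at huv
    by_cases hcase : s(u,v) = s(a,b)
    · rcases Sym2.eq_iff.mp hcase with ⟨rfl, rfl⟩ | ⟨rfl, rfl⟩
      · exact hreachH
      · exact hreachH.symm
    · refine SimpleGraph.Adj.reachable ?_
      rw [hHdef, SimpleGraph.fromEdgeSet_adj]
      refine ⟨Finset.mem_coe.mpr ?_, huv.2⟩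
      rw [hγ2def]
      exact Finset.mem_insert_of_mem (Finset.mem_erase.mpr ⟨hcase, Finset.mem_coe.mp huv.1⟩)
  have hNE : Nonempty V := ⟨x⟩
  have hHconn : H.Connected := by
    rw [SimpleGraph.connected_iff]
    refine ⟨fun u v => ?_, hNE⟩
    obtain ⟨w⟩ := hconn.preconnected u v
    induction w with
    | nil => exact SimpleGraph.Reachable.refl _
    | cons h w ih => exact (hstep _ _ h).trans ih
  refine ⟨?_, hHconn, ?_⟩
  · intro f hf
    rcases Finset.mem_insert.mp (Finset.mem_coe.mp hf) with rfl | hmem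
    · exact hxy
    · exact hsub (Finset.mem_coe.mpr (Finset.mem_of_mem_erase hmem))
  · rw [hγ2def, Finset.card_insert_of_notMem (fun hc => hnot (Finset.mem_of_mem_erase hc)),
      Finset.card_erase_of_mem heγ,
      Nat.sub_add_cancel (Finset.card_pos.mpr ⟨_, heγ⟩), hcard]


/-- stability of optimal pmfs. If `γ*` is in the support of an
MEO-optimal pmf and `e' = {x,y}` is an edge of `G` not in `γ*`, then `η*`
attains its maximum over the created cycle at `e'`; equivalently, every edge
on the (unique) path in `γ*` from `x` to `y` satisfies `η*(e) ≤ η*(e')`. -/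
theorem optimal_usage_max_on_cycle
    {V : Type*} [Fintype V] [DecidableEq V]
    (G : SimpleGraph V) (hG : G.Connected) (hE : G.edgeFinset.Nonempty)
    (μ : Finset (Sym2 V) → ℝ) (hμ : IsPmf (spanningTrees G) μ)
    (hopt : EO (spanningTrees G) μ = MEO (spanningTrees G))
    (γstar : Finset (Sym2 V)) (hγ : γstar ∈ spanningTrees G) (hpos : 0 < μ γstar)
    (x y : V) (hxy : G.Adj x y) (hnot : s(x, y) ∉ γstar) :
    ∀ p : (SimpleGraph.fromEdgeSet (↑γstar : Set (Sym2 V))).Walk x y, p.IsPath →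
      ∀ e ∈ p.edges, eta (spanningTrees G) μ e ≤ eta (spanningTrees G) μ s(x, y) := by
  classical
  intro p hp
  refine Sym2.ind (fun a b he => ?_)
  by_contra hcon
  push_neg at hcon
  set Γ := spanningTrees G with hΓdef
  set γ2 : Finset (Sym2 V) := insert s(x,y) (γstar.erase s(a,b)) with hγ2def
  have hγ2Γ : γ2 ∈ Γ := tree_exchange' G γstar hγ x y hxy hnot p hp a b he
  have heγ : s(a,b) ∈ γstar := by
    have := p.edges_subset_edgeSet he
    rw [SimpleGraph.edgeSet_fromEdgeSet] at this
    exact Finset.mem_coe.mp this.1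
  have hne2 : γ2 ≠ γstar := fun h => hnot (h ▸ Finset.mem_insert_self _ _)
  set d : Finset (Sym2 V) → ℝ :=
    fun γ => (if γ = γ2 then 1 else 0) - (if γ = γstar then 1 else 0) with hddef
  set L : ℝ := eta Γ μ s(x,y) - eta Γ μ s(a,b) with hLdef
  have hL : L < 0 := by rw [hLdef]; linarith
  have hcross : ∀ γ : Finset (Sym2 V),
      ∑ δ ∈ Γ, ((γ ∩ δ).card : ℝ) * μ γ * d δ
        = ((γ ∩ γ2).card : ℝ) * μ γ - ((γ ∩ γstar).card : ℝ) * μ γ := by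
    intro γ
    simp only [hddef, mul_sub, Finset.sum_sub_distrib, mul_ite, mul_one, mul_zero]
    rw [Finset.sum_ite_eq' Γ γ2 (fun δ => ((γ ∩ δ).card : ℝ) * μ γ),
        Finset.sum_ite_eq' Γ γstar (fun δ => ((γ ∩ δ).card : ℝ) * μ γ),
        if_pos hγ2Γ, if_pos hγ]
  have hsum_trees : ∑ f ∈ γ2, eta Γ μ f - ∑ f ∈ γstar, eta Γ μ f = L := by
    have h1 : ∑ f ∈ γ2, eta Γ μ f
        = eta Γ μ s(x,y) + ∑ f ∈ γstar.erase s(a,b), eta Γ μ f := by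
      rw [hγ2def]
      exact Finset.sum_insert (fun hc => hnot (Finset.mem_of_mem_erase hc))
    have h2 : eta Γ μ s(a,b) + ∑ f ∈ γstar.erase s(a,b), eta Γ μ f
        = ∑ f ∈ γstar, eta Γ μ f := Finset.add_sum_erase _ _ heγ
    rw [hLdef]; linarith
  have hS3 : ∑ γ ∈ Γ, ∑ δ ∈ Γ, ((γ ∩ δ).card : ℝ) * μ γ * d δ = L := by
    rw [Finset.sum_congr rfl (fun γ _ => hcross γ), Finset.sum_sub_distrib,
        sum_card_inter' Γ μ γ2, sum_card_inter' Γ μ γstar, hsum_trees]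
  have hS2 : ∑ γ ∈ Γ, ∑ δ ∈ Γ, ((γ ∩ δ).card : ℝ) * d γ * μ δ = L := by
    rw [Finset.sum_comm]
    calc ∑ δ ∈ Γ, ∑ γ ∈ Γ, ((γ ∩ δ).card : ℝ) * d γ * μ δ
        = ∑ δ ∈ Γ, ∑ γ ∈ Γ, ((δ ∩ γ).card : ℝ) * μ δ * d γ := by
          refine Finset.sum_congr rfl fun δ _ => Finset.sum_congr rfl fun γ _ => ?_
          rw [Finset.inter_comm]; ring
      _ = L := hS3
  set Q : ℝ := ∑ γ ∈ Γ, ∑ δ ∈ Γ, ((γ ∩ δ).card : ℝ) * d γ * d δ with hQdef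
  set t : ℝ := min (μ γstar) ((-L) / (|Q| + 1)) with htdef
  have hQ1 : (0:ℝ) < |Q| + 1 := by have := abs_nonneg Q; linarith
  have ht0 : 0 < t := lt_min hpos (div_pos (by linarith) hQ1)
  have htμ : t ≤ μ γstar := min_le_left _ _
  set ν : Finset (Sym2 V) → ℝ := fun γ => μ γ + t * d γ with hνdef
  have hdγ2 : d γ2 = 1 := by simp [hddef, hne2]
  have hdγs : d γstar = -1 := by simp [hddef, hne2.symm]
  have hν : IsPmf Γ ν := by
    refine ⟨?_, ?_, ?_⟩
    · intro γ
      by_cases h2 : γ = γ2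
      · subst h2
        simp only [hνdef, hdγ2]
        nlinarith [hμ.1 γ2, ht0.le]
      · by_cases h3 : γ = γstar
        · subst h3
          simp only [hνdef, hdγs]
          linarith
        · simp only [hνdef, hddef, if_neg h2, if_neg h3]
          simpa using hμ.1 γ
    · intro γ hγn
      have h2 : γ ≠ γ2 := fun h => hγn (h ▸ hγ2Γ)
      have h3 : γ ≠ γstar := fun h => hγn (h ▸ hγ)
      simp [hνdef, hddef, h2, h3, hμ.2.1 γ hγn]
    · have hsd : ∑ γ ∈ Γ, d γ = 0 := by
        simp only [hddef, Finset.sum_sub_distrib]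
        rw [Finset.sum_ite_eq' Γ γ2 (fun _ => (1:ℝ)),
            Finset.sum_ite_eq' Γ γstar (fun _ => (1:ℝ)), if_pos hγ2Γ, if_pos hγ]
        ring
      simp only [hνdef]
      rw [Finset.sum_add_distrib, ← Finset.mul_sum, hsd, hμ.2.2]
      ring
  have hEOν : EO Γ ν = EO Γ μ + t * L + t * L + t^2 * Q := by
    have hterm : ∀ γ δ : Finset (Sym2 V),
        ((γ ∩ δ).card : ℝ) * ν γ * ν δ
          = ((γ ∩ δ).card : ℝ) * μ γ * μ δ
            + (t * (((γ ∩ δ).card : ℝ) * d γ * μ δ)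
            + (t * (((γ ∩ δ).card : ℝ) * μ γ * d δ)
            + t^2 * (((γ ∩ δ).card : ℝ) * d γ * d δ))) := by
      intro γ δ; simp only [hνdef]; ring
    calc EO Γ ν
        = ∑ γ ∈ Γ, ∑ δ ∈ Γ, (((γ ∩ δ).card : ℝ) * μ γ * μ δ
            + (t * (((γ ∩ δ).card : ℝ) * d γ * μ δ)
            + (t * (((γ ∩ δ).card : ℝ) * μ γ * d δ)
            + t^2 * (((γ ∩ δ).card : ℝ) * d γ * d δ)))) :=
          Finset.sum_congr rfl fun γ _ => Finset.sum_congr rfl fun δ _ => hterm γ δ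
      _ = EO Γ μ + t * L + t * L + t^2 * Q := by
          simp only [Finset.sum_add_distrib, ← Finset.mul_sum]
          rw [hS2, hS3, ← hQdef]
          rw [show (∑ γ ∈ Γ, ∑ δ ∈ Γ, ((γ ∩ δ).card : ℝ) * μ γ * μ δ) = EO Γ μ from rfl]
          ring
  have hMEO : MEO Γ ≤ EO Γ ν := MEO_le' Γ ν hν
  have h1' : t ≤ (-L)/(|Q|+1) := min_le_right _ _
  have h1'' : t * (|Q|+1) ≤ -L := (le_div_iff₀ hQ1).mp h1'
  have h2' : t * Q ≤ -L :=
    le_trans (by nlinarith [le_abs_self Q, ht0.le]) h1''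
  have hkey : 2*L + t*Q < 0 := by linarith
  have hlt : EO Γ ν < EO Γ μ := by
    rw [hEOν]
    nlinarith [mul_neg_of_pos_of_neg ht0 hkey]
  rw [hopt] at hlt
  linarith
end
end
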